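/- arXiv:2012.15142 — 2 statements merged into one kernel-verified Lean document; each statement's English description precedes it below -/
import Mathlib

section
/- For n ≥ (s+1)·k, the maximum size of a family F of k-subsets of {1,...,n} with matching number at most s and clique number at least sk+k-2 equals max{ C(sk+k-1, k), C(sk+k-2, k) + C(sk+k-3, k-2)·(n - sk - k + 2) }. -/
open Finset

/-- Coordinatewise (shifting) partial order on finite sets of naturals:
`A ≼ B` iff the increasing enumerations satisfy `aₗ ≤ bₗ` for all `l`. -/
def shiftLE (A B : Finset ℕ) : Prop :=
  List.Forall₂ (· ≤ ·) (A.sort (· ≤ ·)) (B.sort (· ≤ ·))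

/-- A family on the ground set `{1,…,n}` is shifted. -/
def IsShifted (n : ℕ) (F : Finset (Finset ℕ)) : Prop :=
  ∀ B ∈ F, ∀ A ⊆ Finset.Icc 1 n, shiftLE A B → A ∈ F

/-- The matching number of `F` is at most `s`. -/
def MatchingLE (F : Finset (Finset ℕ)) (s : ℕ) : Prop :=
  ∀ M ⊆ F, (M : Set (Finset ℕ)).PairwiseDisjoint id → M.card ≤ s

/-- `F` contains `s` pairwise disjoint members. -/
def HasMatching (F : Finset (Finset ℕ)) (s : ℕ) : Prop :=
  ∃ M ⊆ F, (M : Set (Finset ℕ)).PairwiseDisjoint id ∧ M.card = s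

/-- The clique number of `F` (as a `k`-graph on `{1,…,n}`) is at least `q`. -/
def HasClique (n : ℕ) (F : Finset (Finset ℕ)) (k q : ℕ) : Prop :=
  ∃ Q ⊆ Finset.Icc 1 n, Q.card = q ∧ Q.powersetCard k ⊆ F

lemma exists_disjoint_family (k : ℕ) (hk : 0 < k) :
    ∀ (s : ℕ) (Y : Finset ℕ), s * k ≤ Y.card →
    ∃ M : Finset (Finset ℕ), (M : Set (Finset ℕ)).PairwiseDisjoint id ∧ M.card = s ∧
      ∀ A ∈ M, A ⊆ Y ∧ A.card = k := by
  intro s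
  induction s with
  | zero => exact fun Y _ => ⟨∅, by simp, rfl, by simp⟩
  | succ s ih =>
    intro Y hY
    rw [Nat.succ_mul] at hY
    obtain ⟨T, hTY, hT⟩ := Y.exists_subset_card_eq (le_trans (Nat.le_add_left k (s*k)) hY)
    have h2 : s * k ≤ (Y \ T).card := by
      rw [card_sdiff_of_subset hTY, hT]; omega
    obtain ⟨M, hMd, hMc, hMm⟩ := ih (Y \ T) h2
    have hTnM : T ∉ M := by
      intro hTM
      have h3 := (hMm T hTM).1
      have hne : T.Nonempty := by rw [← card_pos, hT]; exact hk
      obtain ⟨a, ha⟩ := hne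
      exact (mem_sdiff.1 (h3 ha)).2 ha
    refine ⟨insert T M, ?_, ?_, ?_⟩
    · rw [coe_insert]
      refine hMd.insert fun B hB _ => ?_
      have hB' := (hMm B hB).1
      exact Finset.disjoint_left.2 fun a haT haB => (mem_sdiff.1 (hB' haB)).2 haT
    · rw [card_insert_of_notMem hTnM, hMc]
    · intro A hA
      rcases mem_insert.1 hA with rfl | hA
      · exact ⟨hTY, hT⟩
      · exact ⟨(hMm A hA).1.trans sdiff_subset, (hMm A hA).2⟩

lemma card_mul_le_of_disjoint {M : Finset (Finset ℕ)} {Y : Finset ℕ} {k : ℕ}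
    (hd : (M : Set (Finset ℕ)).PairwiseDisjoint id)
    (hm : ∀ A ∈ M, A ⊆ Y ∧ A.card = k) : M.card * k ≤ Y.card := by
  have h1 : (M.biUnion id).card = ∑ A ∈ M, A.card :=
    card_biUnion (fun x hx y hy hxy => hd (by simpa using hx) (by simpa using hy) hxy)
  calc M.card * k = ∑ A ∈ M, A.card := by
        rw [Finset.sum_congr rfl fun A hA => (hm A hA).2, sum_const, smul_eq_mul]
    _ = (M.biUnion id).card := h1.symm
    _ ≤ Y.card := card_le_card (biUnion_subset.2 fun A hA => (hm A hA).1)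

def arc (q ℓ : ℕ) (t : ZMod q) : Finset (ZMod q) :=
  (Finset.range ℓ).image (fun r : ℕ => t + (r : ZMod q))

lemma arc_inter {q ℓ : ℕ} [NeZero q] (hq2 : 2*ℓ ≤ q) {t u : ZMod q}
    (h : ¬ Disjoint (arc q ℓ t) (arc q ℓ u)) : (u - t).val < ℓ ∨ (t - u).val < ℓ := by
  rw [Finset.not_disjoint_iff] at h
  obtain ⟨a, ha, hb⟩ := h
  simp only [arc, mem_image, mem_range] at ha hb
  obtain ⟨r, hr, hra⟩ := ha
  obtain ⟨r', hr', hrb⟩ := hb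
  have he : t + (r : ZMod q) = u + (r' : ZMod q) := by rw [hra, hrb]
  rcases le_or_gt r' r with hle | hlt
  · left
    have h1 : u - t = ((r - r' : ℕ) : ZMod q) := by
      rw [Nat.cast_sub hle]; linear_combination -he
    rw [h1, ZMod.val_cast_of_lt (by omega)]
    omega
  · right
    have h1 : t - u = ((r' - r : ℕ) : ZMod q) := by
      rw [Nat.cast_sub hlt.le]; linear_combination he
    rw [h1, ZMod.val_cast_of_lt (by omega)]
    omega

lemma arc_disjoint {q ℓ : ℕ} [NeZero q] (hq2 : 2*ℓ ≤ q) {t u : ZMod q}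
    (h1 : ℓ ≤ (u - t).val) (h2 : ℓ ≤ (t - u).val) : Disjoint (arc q ℓ t) (arc q ℓ u) := by
  by_contra hc
  rcases arc_inter hq2 hc with h | h <;> omega

def classif (q ℓ : ℕ) [NeZero q] (t₀ u : ZMod q) : ℕ :=
  if (u - t₀).val < ℓ then (u - t₀).val else (u - t₀).val - (q - ℓ)

lemma percycle {q ℓ : ℕ} [NeZero q] (hq2 : 2*ℓ ≤ q) (hℓ : 1 ≤ ℓ)
    (ι : Finset ℕ) (J : ℕ → Finset (ZMod q))
    (cross : ∀ x ∈ ι, ∀ y ∈ ι, x ≠ y → ∀ t ∈ J x, ∀ u ∈ J y,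
      ¬ Disjoint (arc q ℓ t) (arc q ℓ u)) :
    ∑ x ∈ ι, (J x).card ≤ max q (ι.card * ℓ) := by
  have hqpos : 0 < q := Nat.pos_of_ne_zero (NeZero.ne q)
  by_cases hq : ∑ x ∈ ι, (J x).card ≤ q
  · exact le_max_of_le_left hq
  push_neg at hq
  set mult : ZMod q → ℕ := fun t => (ι.filter (fun x => t ∈ J x)).card with hmult
  have hsum : ∑ x ∈ ι, (J x).card = ∑ t : ZMod q, mult t := by
    have h1 : ∀ x, (J x).card = ∑ t : ZMod q, if t ∈ J x then 1 else 0 := by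
      intro x
      rw [← Finset.sum_filter, Finset.filter_univ_mem, Finset.card_eq_sum_ones]
    have h2 : ∀ t, mult t = ∑ x ∈ ι, if t ∈ J x then 1 else 0 := by
      intro t
      show (ι.filter (fun x => t ∈ J x)).card = ∑ x ∈ ι, if t ∈ J x then 1 else 0
      rw [Finset.card_eq_sum_ones, Finset.sum_filter]
    simp only [h1, h2]
    exact Finset.sum_comm
  have hcard1 : ∑ _t : ZMod q, (1:ℕ) = q := by
    simp [Finset.card_univ, ZMod.card]
  obtain ⟨t₀, ht₀⟩ : ∃ t : ZMod q, 2 ≤ mult t := by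
    by_contra hc
    push_neg at hc
    have : ∑ t : ZMod q, mult t ≤ ∑ _t : ZMod q, 1 :=
      Finset.sum_le_sum fun t _ => Nat.lt_succ_iff.mp (hc t)
    omega
  obtain ⟨x, hx, y, hy, hxy⟩ := Finset.one_lt_card.1 ht₀
  rw [mem_filter] at hx hy
  have hι2 : 2 ≤ ι.card := Finset.one_lt_card.2 ⟨x, hx.1, y, hy.1, hxy⟩
  have hclose : ∀ u : ZMod q, mult u ≠ 0 → (u - t₀).val < ℓ ∨ (t₀ - u).val < ℓ := by
    intro u hu
    have : (ι.filter (fun x => u ∈ J x)).Nonempty := Finset.card_pos.1 (Nat.pos_of_ne_zero hu)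
    obtain ⟨z, hz⟩ := this
    rw [mem_filter] at hz
    rcases eq_or_ne z x with rfl | hzx
    · have := cross z hz.1 y hy.1 hxy u hz.2 t₀ hy.2
      rcases arc_inter hq2 this with h | h
      · right; exact h
      · left; exact h
    · have := cross z hz.1 x hx.1 hzx u hz.2 t₀ hx.2
      rcases arc_inter hq2 this with h | h
      · right; exact h
      · left; exact h
  have hfar : ∀ u v : ZMod q, ℓ ≤ (u - v).val → ℓ ≤ (v - u).val →
      mult u + mult v ≤ ι.card := by
    intro u v h1 h2
    have hdis : Disjoint (arc q ℓ v) (arc q ℓ u) := arc_disjoint hq2 h1 h2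
    have key : ∀ w w' : ZMod q, Disjoint (arc q ℓ w) (arc q ℓ w') → 2 ≤ mult w → mult w' = 0 := by
      intro w w' hd h2m
      obtain ⟨a, ha, b, hb, hab⟩ := Finset.one_lt_card.1 h2m
      rw [mem_filter] at ha hb
      by_contra hc
      obtain ⟨z, hz⟩ := Finset.card_pos.1 (Nat.pos_of_ne_zero hc)
      rw [mem_filter] at hz
      rcases eq_or_ne z a with rfl | hza
      · exact cross z hz.1 b hb.1 hab w' hz.2 w hb.2 hd.symm
      · exact cross z hz.1 a ha.1 hza w' hz.2 w ha.2 hd.symm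
    rcases le_or_gt 2 (mult u) with h2u | h2u
    · have hv0 := key u v hdis.symm h2u
      rw [hv0, add_zero]
      exact Finset.card_filter_le _ _
    rcases le_or_gt 2 (mult v) with h2v | h2v
    · have hu0 := key v u hdis h2v
      rw [hu0, zero_add]
      exact Finset.card_filter_le _ _
    · omega
  have hval : ∀ u : ZMod q, (u - t₀).val < q := fun u => ZMod.val_lt _
  have hfmem : ∀ u : ZMod q, classif q ℓ t₀ u ∈ Finset.range ℓ := by
    intro u
    rw [Finset.mem_range, classif]
    have := hval u
    split <;> omega
  have hsplit : ∑ t : ZMod q, mult t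
      = ∑ c ∈ Finset.range ℓ, ∑ t ∈ Finset.univ.filter (fun u => classif q ℓ t₀ u = c), mult t :=
    (Finset.sum_fiberwise_of_maps_to (fun u _ => hfmem u) mult).symm
  have hfiber : ∀ c ∈ Finset.range ℓ,
      ∑ t ∈ Finset.univ.filter (fun u => classif q ℓ t₀ u = c), mult t ≤ ι.card := by
    intro c hc
    rw [Finset.mem_range] at hc
    rcases Nat.eq_zero_or_pos c with rfl | hcpos
    · have hz : ∀ u ∈ Finset.univ.filter (fun u => classif q ℓ t₀ u = 0), mult u ≠ 0 → u = t₀ := by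
        intro u hu hmu
        rw [Finset.mem_filter, classif] at hu
        have hu2 := hu.2
        by_cases hlt : (u - t₀).val < ℓ
        · rw [if_pos hlt] at hu2
          have h0 : u - t₀ = 0 := by rwa [← ZMod.val_eq_zero]
          have := sub_eq_zero.mp h0
          exact this
        · rw [if_neg hlt] at hu2
          push_neg at hlt
          exfalso
          have hne0 : u - t₀ ≠ 0 := by
            intro h0
            rw [h0, ZMod.val_zero] at hlt
            omega
          have hneg : (t₀ - u).val = q - (u - t₀).val := by
            rw [← neg_sub, ZMod.neg_val, if_neg hne0]
          rcases hclose u hmu with h | h <;> omega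
      calc ∑ t ∈ Finset.univ.filter (fun u => classif q ℓ t₀ u = 0), mult t
          = ∑ t ∈ (Finset.univ.filter (fun u => classif q ℓ t₀ u = 0)).filter (fun t => mult t ≠ 0), mult t :=
            (Finset.sum_filter_ne_zero _).symm
        _ ≤ ∑ t ∈ {t₀}, mult t := by
            apply Finset.sum_le_sum_of_subset
            intro u hu
            rw [Finset.mem_filter] at hu
            rw [Finset.mem_singleton]
            exact hz u hu.1 hu.2
        _ = mult t₀ := Finset.sum_singleton _ _
        _ ≤ ι.card := Finset.card_filter_le _ _
    · set a := t₀ + (c : ZMod q) with hadef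
      set b := t₀ + ((c + (q - ℓ) : ℕ) : ZMod q) with hbdef
      have hba : b - a = ((q - ℓ : ℕ) : ZMod q) := by
        rw [hadef, hbdef]
        push_cast
        ring
      have hbaval : (b - a).val = q - ℓ := by
        rw [hba, ZMod.val_cast_of_lt (by omega)]
      have hbane : b - a ≠ 0 := by
        intro h0
        rw [h0, ZMod.val_zero] at hbaval
        omega
      have habval : (a - b).val = ℓ := by
        rw [← neg_sub b a, ZMod.neg_val, if_neg hbane, hbaval]
        omega
      have hab : a ≠ b := by
        intro h
        exact hbane (by rw [h, sub_self])
      have hsub : Finset.univ.filter (fun u => classif q ℓ t₀ u = c) ⊆ {a, b} := by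
        intro u hu
        rw [Finset.mem_filter, classif] at hu
        have hu2 := hu.2
        rw [Finset.mem_insert, Finset.mem_singleton]
        by_cases hlt : (u - t₀).val < ℓ
        · rw [if_pos hlt] at hu2
          left
          have : u - t₀ = (c : ZMod q) := by
            rw [← hu2, ZMod.natCast_zmod_val]
          rw [hadef, ← this]
          ring
        · rw [if_neg hlt] at hu2
          right
          push_neg at hlt
          have hvv := hval u
          have hveq : (u - t₀).val = c + (q - ℓ) := by omega
          have : u - t₀ = ((c + (q - ℓ) : ℕ) : ZMod q) := by
            rw [← hveq, ZMod.natCast_zmod_val]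
          rw [hbdef, ← this]
          ring
      calc ∑ t ∈ Finset.univ.filter (fun u => classif q ℓ t₀ u = c), mult t
          ≤ ∑ t ∈ ({a, b} : Finset (ZMod q)), mult t := Finset.sum_le_sum_of_subset hsub
        _ = mult a + mult b := Finset.sum_pair hab
        _ ≤ ι.card := hfar a b habval.ge (by rw [hbaval]; omega)
  calc ∑ x ∈ ι, (J x).card = ∑ t : ZMod q, mult t := hsum
    _ = ∑ c ∈ Finset.range ℓ, ∑ t ∈ Finset.univ.filter (fun u => classif q ℓ t₀ u = c), mult t := hsplit
    _ ≤ ∑ _c ∈ Finset.range ℓ, ι.card := Finset.sum_le_sum hfiber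
    _ = ℓ * ι.card := by simp [mul_comm]
    _ ≤ max q (ι.card * ℓ) := le_max_of_le_right (by rw [mul_comm])

lemma arc_card {q ℓ : ℕ} [NeZero q] (hq2 : 2*ℓ ≤ q) (t : ZMod q) :
    (arc q ℓ t).card = ℓ := by
  rw [arc, Finset.card_image_of_injOn, Finset.card_range]
  intro r hr r' hr' he
  rw [Finset.mem_coe, Finset.mem_range] at hr hr'
  have h1 : (r : ZMod q) = r' := by
    have h0 : t + (r : ZMod q) = t + r' := he
    linear_combination h0
  have h2 := congrArg ZMod.val h1
  rwa [ZMod.val_cast_of_lt (by omega), ZMod.val_cast_of_lt (by omega)] at h2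

lemma exists_perm_image {α : Type*} [Fintype α] [DecidableEq α] {S S' : Finset α}
    (h : S.card = S'.card) : ∃ π : Equiv.Perm α, S.image π = S' := by
  have hc : Sᶜ.card = S'ᶜ.card := by rw [card_compl, card_compl, h]
  let e₁ : {x // x ∈ S} ≃ {x // x ∈ S'} := Finset.equivOfCardEq h
  let e₂ : {x // x ∈ Sᶜ} ≃ {x // x ∈ S'ᶜ} := Finset.equivOfCardEq hc
  let f₁ : {x // ¬ x ∈ S} ≃ {x // x ∈ Sᶜ} :=
    Equiv.subtypeEquivRight (fun x => (Finset.mem_compl).symm)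
  let f₂ : {x // x ∈ S'ᶜ} ≃ {x // ¬ x ∈ S'} :=
    Equiv.subtypeEquivRight (fun x => Finset.mem_compl)
  let π : Equiv.Perm α := (Equiv.sumCompl (· ∈ S)).symm.trans
    ((e₁.sumCongr ((f₁.trans e₂).trans f₂)).trans (Equiv.sumCompl (· ∈ S')))
  have hsubset : S.image π ⊆ S' := by
    intro y hy
    rw [Finset.mem_image] at hy
    obtain ⟨x, hx, rfl⟩ := hy
    have hπx : π x = (e₁ ⟨x, hx⟩ : α) := by
      simp only [π, Equiv.trans_apply]
      rw [Equiv.sumCompl_symm_apply_of_pos (p := (· ∈ S)) hx]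
      simp
    rw [hπx]
    exact Finset.coe_mem _
  refine ⟨π, Finset.eq_of_subset_of_card_le hsubset ?_⟩
  rw [Finset.card_image_of_injective _ π.injective, h]

/-- number of permutations mapping `A` onto `S` -/
def pcnt {α : Type*} [Fintype α] [DecidableEq α] (A S : Finset α) : ℕ :=
  (Finset.univ.filter fun σ : Equiv.Perm α => A.image σ = S).card

lemma pcnt_eq {α : Type*} [Fintype α] [DecidableEq α] (A : Finset α) {S S' : Finset α}
    (h : S.card = S'.card) : pcnt A S = pcnt A S' := by
  obtain ⟨π, hπ⟩ := exists_perm_image h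
  have himg : ∀ (ρ σ : Equiv.Perm α), A.image ⇑(ρ * σ) = (A.image σ).image ρ := by
    intro ρ σ
    rw [show ⇑(ρ * σ) = ⇑ρ ∘ ⇑σ from rfl, ← Finset.image_image]
  apply Finset.card_bij' (fun σ _ => π * σ) (fun σ _ => π⁻¹ * σ)
  · intro σ hσ
    rw [Finset.mem_filter] at hσ ⊢
    refine ⟨Finset.mem_univ _, ?_⟩
    rw [himg, hσ.2, hπ]
  · intro σ hσ
    rw [Finset.mem_filter] at hσ ⊢
    refine ⟨Finset.mem_univ _, ?_⟩
    rw [himg, hσ.2, ← hπ, Finset.image_image]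
    have hcomp : ⇑π⁻¹ ∘ ⇑π = id := by ext z; simp
    rw [hcomp, Finset.image_id]
  · intro σ _; group
  · intro σ _; group

lemma count_fiber {α : Type*} [Fintype α] [DecidableEq α] (A : Finset α)
    (Gx : Finset (Finset α)) :
    (Finset.univ.filter fun σ : Equiv.Perm α => A.image σ ∈ Gx).card
      = ∑ S ∈ Gx, pcnt A S := by
  rw [Finset.card_eq_sum_card_fiberwise (f := fun σ : Equiv.Perm α => A.image σ) (t := Gx)
    (s := Finset.univ.filter fun σ : Equiv.Perm α => A.image σ ∈ Gx) (fun σ hσ => (Finset.mem_filter.1 hσ).2)]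
  refine Finset.sum_congr rfl fun S hS => ?_
  rw [pcnt]
  congr 1
  ext σ
  simp only [Finset.mem_filter, Finset.mem_univ, true_and]
  constructor
  · exact fun h => h.2
  · exact fun h => ⟨by rw [h]; exact hS, h⟩

lemma perm_count {α : Type*} [Fintype α] [DecidableEq α] {ℓ : ℕ} (A S₀ : Finset α)
    (hA : A.card = ℓ) (hS : S₀.card = ℓ) :
    Fintype.card (Equiv.Perm α) = (Fintype.card α).choose ℓ * pcnt A S₀ := by
  rw [← Finset.card_univ (α := Equiv.Perm α)]
  rw [Finset.card_eq_sum_card_fiberwise (f := fun σ : Equiv.Perm α => A.image σ)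
      (t := Finset.univ.powersetCard ℓ)
      (fun σ _ => Finset.mem_powersetCard.2 ⟨Finset.subset_univ _,
        by rw [Finset.card_image_of_injective _ σ.injective, hA]⟩)]
  have hstep : ∀ S ∈ Finset.univ.powersetCard ℓ,
      (Finset.univ.filter (fun σ : Equiv.Perm α => A.image σ = S)).card = pcnt A S₀ := by
    intro S hS'
    exact pcnt_eq A (by rw [(Finset.mem_powersetCard.1 hS').2, hS])
  rw [Finset.sum_congr rfl hstep, Finset.sum_const, Finset.card_powersetCard,
    Finset.card_univ, smul_eq_mul]

lemma nat_mul_max (a b c : ℕ) : a * max b c = max (a*b) (a*c) := by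
  rcases le_total b c with h | h
  · rw [max_eq_right h, max_eq_right (Nat.mul_le_mul_left a h)]
  · rw [max_eq_left h, max_eq_left (Nat.mul_le_mul_left a h)]

lemma cross_lemma_zmod {q ℓ : ℕ} [NeZero q] (hq2 : 2*ℓ ≤ q) (hℓ : 1 ≤ ℓ)
    (ι : Finset ℕ) (G : ℕ → Finset (Finset (ZMod q)))
    (hG : ∀ x ∈ ι, ∀ S ∈ G x, S.card = ℓ)
    (cross : ∀ x ∈ ι, ∀ y ∈ ι, x ≠ y → ∀ S ∈ G x, ∀ T ∈ G y, ¬ Disjoint S T) :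
    ∑ x ∈ ι, (G x).card ≤ max (q.choose ℓ) (ι.card * (q-1).choose (ℓ-1)) := by
  classical
  have hqpos : 0 < q := by omega
  set J : ℕ → Equiv.Perm (ZMod q) → Finset (ZMod q) :=
    fun x σ => Finset.univ.filter (fun t => (arc q ℓ t).image σ ∈ G x) with hJ
  have hper : ∀ σ : Equiv.Perm (ZMod q), ∑ x ∈ ι, (J x σ).card ≤ max q (ι.card * ℓ) := by
    intro σ
    apply percycle hq2 hℓ
    intro x hxι y hyι hxy t ht u hu
    rw [hJ, Finset.mem_filter] at ht hu
    exact fun hdis => cross x hxι y hyι hxy _ ht.2 _ hu.2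
      ((Finset.disjoint_image σ.injective).2 hdis)
  have harc : ∀ t : ZMod q, (arc q ℓ t).card = ℓ := arc_card hq2
  set S₀ : Finset (ZMod q) := arc q ℓ 0 with hS₀
  have hS₀c : S₀.card = ℓ := harc 0
  have hJsum : ∀ x ∈ ι, ∑ σ : Equiv.Perm (ZMod q), (J x σ).card
      = (G x).card * ∑ t : ZMod q, pcnt (arc q ℓ t) S₀ := by
    intro x hxι
    have h1 : ∀ σ, (J x σ).card = ∑ t : ZMod q, if (arc q ℓ t).image σ ∈ G x then 1 else 0 := by
      intro σ
      rw [hJ]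
      rw [Finset.card_eq_sum_ones, Finset.sum_filter]
    calc ∑ σ : Equiv.Perm (ZMod q), (J x σ).card
        = ∑ σ : Equiv.Perm (ZMod q), ∑ t : ZMod q,
            (if (arc q ℓ t).image σ ∈ G x then 1 else 0) :=
          Finset.sum_congr rfl fun σ _ => h1 σ
      _ = ∑ t : ZMod q, ∑ σ : Equiv.Perm (ZMod q),
            (if (arc q ℓ t).image σ ∈ G x then 1 else 0) := Finset.sum_comm
      _ = ∑ t : ZMod q, (G x).card * pcnt (arc q ℓ t) S₀ := by
          refine Finset.sum_congr rfl fun t _ => ?_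
          rw [← Finset.sum_filter, ← Finset.card_eq_sum_ones, count_fiber]
          rw [Finset.sum_congr rfl (fun S hS => pcnt_eq (arc q ℓ t)
            (by rw [hG x hxι S hS, hS₀c] : S.card = S₀.card)),
            Finset.sum_const, smul_eq_mul]
      _ = (G x).card * ∑ t : ZMod q, pcnt (arc q ℓ t) S₀ := by rw [Finset.mul_sum]
  set P := Fintype.card (Equiv.Perm (ZMod q)) with hP
  have htotal : ∀ t : ZMod q, P = q.choose ℓ * pcnt (arc q ℓ t) S₀ := by
    intro t
    rw [hP, perm_count (arc q ℓ t) S₀ (harc t) hS₀c, ZMod.card]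
  set c0 := ∑ t : ZMod q, pcnt (arc q ℓ t) S₀ with hc0
  have hD : q.choose ℓ * c0 = q * P := by
    rw [hc0, Finset.mul_sum, Finset.sum_congr rfl (fun t _ => (htotal t).symm),
      Finset.sum_const, Finset.card_univ, ZMod.card, smul_eq_mul]
  have hmain : (∑ x ∈ ι, (G x).card) * c0 ≤ P * max q (ι.card * ℓ) := by
    calc (∑ x ∈ ι, (G x).card) * c0 = ∑ x ∈ ι, (G x).card * c0 := Finset.sum_mul _ _ _
      _ = ∑ x ∈ ι, ∑ σ : Equiv.Perm (ZMod q), (J x σ).card :=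
          Finset.sum_congr rfl fun x hx => (hJsum x hx).symm
      _ = ∑ σ : Equiv.Perm (ZMod q), ∑ x ∈ ι, (J x σ).card := Finset.sum_comm
      _ ≤ ∑ _σ : Equiv.Perm (ZMod q), max q (ι.card * ℓ) :=
          Finset.sum_le_sum fun σ _ => hper σ
      _ = P * max q (ι.card * ℓ) := by
          rw [Finset.sum_const, Finset.card_univ, smul_eq_mul]
  have hPpos : 0 < P := Fintype.card_pos
  have hid : q.choose ℓ * ℓ = q * (q-1).choose (ℓ-1) := by
    have h := Nat.add_one_mul_choose_eq (q-1) (ℓ-1)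
    rw [Nat.sub_add_cancel (by omega : 1 ≤ q), Nat.sub_add_cancel hℓ] at h
    exact h.symm
  have h2 : (q * ∑ x ∈ ι, (G x).card) * P ≤ (q.choose ℓ * max q (ι.card * ℓ)) * P := by
    calc (q * ∑ x ∈ ι, (G x).card) * P = (∑ x ∈ ι, (G x).card) * (q * P) := by ring
      _ = (∑ x ∈ ι, (G x).card) * (q.choose ℓ * c0) := by rw [hD]
      _ = q.choose ℓ * ((∑ x ∈ ι, (G x).card) * c0) := by ring
      _ ≤ q.choose ℓ * (P * max q (ι.card * ℓ)) := Nat.mul_le_mul_left _ hmain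
      _ = (q.choose ℓ * max q (ι.card * ℓ)) * P := by ring
  have h3 : q * ∑ x ∈ ι, (G x).card ≤ q.choose ℓ * max q (ι.card * ℓ) :=
    Nat.le_of_mul_le_mul_right h2 hPpos
  have h4 : q.choose ℓ * max q (ι.card * ℓ)
      = q * max (q.choose ℓ) (ι.card * (q-1).choose (ℓ-1)) := by
    rw [nat_mul_max, nat_mul_max]
    congr 1
    · ring
    · calc q.choose ℓ * (ι.card * ℓ) = ι.card * (q.choose ℓ * ℓ) := by ring
        _ = ι.card * (q * (q-1).choose (ℓ-1)) := by rw [hid]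
        _ = q * (ι.card * (q-1).choose (ℓ-1)) := by ring
  exact Nat.le_of_mul_le_mul_left (by rw [← h4]; exact h3) hqpos

lemma cross_lemma_finset {q ℓ : ℕ} (hq2 : 2*ℓ ≤ q) (hℓ : 1 ≤ ℓ)
    (Q : Finset ℕ) (hQc : Q.card = q)
    (ι : Finset ℕ) (G : ℕ → Finset (Finset ℕ))
    (hG : ∀ x ∈ ι, ∀ S ∈ G x, S ⊆ Q ∧ S.card = ℓ)
    (cross : ∀ x ∈ ι, ∀ y ∈ ι, x ≠ y → ∀ S ∈ G x, ∀ T ∈ G y, ¬ Disjoint S T) :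
    ∑ x ∈ ι, (G x).card ≤ max (q.choose ℓ) (ι.card * (q-1).choose (ℓ-1)) := by
  haveI : NeZero q := ⟨by omega⟩
  have hcard : Fintype.card {x // x ∈ Q} = Fintype.card (ZMod q) := by
    rw [Fintype.card_coe, hQc, ZMod.card]
  set e : {x // x ∈ Q} ≃ ZMod q := Fintype.equivOfCardEq hcard with he
  set φ : Finset ℕ → Finset (ZMod q) :=
    fun T => Finset.univ.filter (fun z => ((e.symm z : {x // x ∈ Q}) : ℕ) ∈ T) with hφ
  have hφmem : ∀ (T : Finset ℕ) (a : ℕ) (ha : a ∈ Q), (a ∈ T ↔ e ⟨a, ha⟩ ∈ φ T) := by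
    intro T a ha
    rw [hφ, Finset.mem_filter]
    simp
  have hφcard : ∀ T ⊆ Q, (φ T).card = T.card := by
    intro T hTQ
    apply Finset.card_bij (fun z _ => ((e.symm z : {x // x ∈ Q}) : ℕ))
    · intro z hz; exact (Finset.mem_filter.1 hz).2
    · intro z hz z' hz' hzz
      exact e.symm.injective (Subtype.coe_injective hzz)
    · intro t ht
      refine ⟨e ⟨t, hTQ ht⟩, ?_, by simp⟩
      rw [Finset.mem_filter]
      exact ⟨Finset.mem_univ _, by simpa using ht⟩
  have hφinj : ∀ S ⊆ Q, ∀ T ⊆ Q, φ S = φ T → S = T := by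
    intro S hS T hT hST
    ext a
    constructor
    · intro haS
      have haQ := hS haS
      have := (hφmem S a haQ).1 haS
      rw [hST] at this
      exact (hφmem T a haQ).2 this
    · intro haT
      have haQ := hT haT
      have := (hφmem T a haQ).1 haT
      rw [← hST] at this
      exact (hφmem S a haQ).2 this
  set G' : ℕ → Finset (Finset (ZMod q)) := fun x => (G x).image φ with hG'
  have hGcard : ∀ x ∈ ι, (G' x).card = (G x).card := by
    intro x hx
    rw [hG']
    apply Finset.card_image_of_injOn
    intro S hS T hT
    exact hφinj S (hG x hx S hS).1 T (hG x hx T hT).1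
  have hbound := cross_lemma_zmod hq2 hℓ ι G' ?_ ?_
  · calc ∑ x ∈ ι, (G x).card = ∑ x ∈ ι, (G' x).card :=
        Finset.sum_congr rfl fun x hx => (hGcard x hx).symm
      _ ≤ _ := hbound
  · intro x hx S hS
    rw [hG'] at hS
    obtain ⟨T, hT, rfl⟩ := Finset.mem_image.1 hS
    rw [hφcard T (hG x hx T hT).1]
    exact (hG x hx T hT).2
  · intro x hx y hy hxy S hS T hT
    rw [hG'] at hS hT
    obtain ⟨S₁, hS₁, rfl⟩ := Finset.mem_image.1 hS
    obtain ⟨T₁, hT₁, rfl⟩ := Finset.mem_image.1 hT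
    have := cross x hx y hy hxy S₁ hS₁ T₁ hT₁
    rw [Finset.not_disjoint_iff] at this ⊢
    obtain ⟨a, haS, haT⟩ := this
    have haQ : a ∈ Q := (hG x hx S₁ hS₁).1 haS
    exact ⟨e ⟨a, haQ⟩, (hφmem S₁ a haQ).1 haS, (hφmem T₁ a haQ).1 haT⟩

lemma boundary_bound {q ℓ : ℕ} (hq2 : 2*ℓ ≤ q) (hℓ : 1 ≤ ℓ)
    (X Q : Finset ℕ) (hQX : Q ⊆ X) (hQc : Q.card = q)
    (F1 : Finset (Finset ℕ))
    (hmem : ∀ A ∈ F1, A ⊆ X ∧ (A ∩ Q).card = ℓ ∧ (A \ Q).card = 1)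
    (hint : ∀ A ∈ F1, ∀ B ∈ F1, ¬ Disjoint A B) :
    F1.card ≤ max (q.choose ℓ) ((X.card - Q.card) * (q-1).choose (ℓ-1)) := by
  classical
  set ι : Finset ℕ := X \ Q with hι
  have hιc : ι.card = X.card - Q.card := Finset.card_sdiff_of_subset hQX
  set f : Finset ℕ → ℕ := fun A => (A \ Q).sum id with hf
  have hfA : ∀ A ∈ F1, ∀ x : ℕ, (f A = x ↔ A \ Q = {x}) := by
    intro A hA x
    obtain ⟨y, hy⟩ := Finset.card_eq_one.1 (hmem A hA).2.2
    rw [hf]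
    simp only [hy, Finset.sum_singleton, id]
    constructor
    · rintro rfl; rfl
    · intro h; exact Finset.singleton_inj.1 h
  have hfι : ∀ A ∈ F1, f A ∈ ι := by
    intro A hA
    obtain ⟨y, hy⟩ := Finset.card_eq_one.1 (hmem A hA).2.2
    have hfy : f A = y := (hfA A hA y).2 hy
    rw [hfy, hι, Finset.mem_sdiff]
    have : y ∈ A \ Q := by rw [hy]; exact Finset.mem_singleton_self y
    rw [Finset.mem_sdiff] at this
    exact ⟨(hmem A hA).1 this.1, this.2⟩
  have hsplit : F1.card = ∑ x ∈ ι, (F1.filter (fun A => f A = x)).card :=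
    Finset.card_eq_sum_card_fiberwise hfι
  set G : ℕ → Finset (Finset ℕ) := fun x => (F1.filter (fun A => f A = x)).image (fun A => A ∩ Q)
    with hG
  have hrecover : ∀ x : ℕ, ∀ A ∈ F1.filter (fun A => f A = x), A \ Q = {x} := by
    intro x A hA
    rw [Finset.mem_filter] at hA
    exact (hfA A hA.1 x).1 hA.2
  have hGcard : ∀ x : ℕ, (G x).card = (F1.filter (fun A => f A = x)).card := by
    intro x
    rw [hG]
    apply Finset.card_image_of_injOn
    intro A hA B hB hAB0
    have hAB : A ∩ Q = B ∩ Q := hAB0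
    have hAx := hrecover x A hA
    have hBx := hrecover x B hB
    ext a
    constructor
    · intro haA
      by_cases haQ : a ∈ Q
      · have : a ∈ B ∩ Q := by rw [← hAB]; exact Finset.mem_inter.2 ⟨haA, haQ⟩
        exact (Finset.mem_inter.1 this).1
      · have : a ∈ A \ Q := Finset.mem_sdiff.2 ⟨haA, haQ⟩
        rw [hAx] at this
        have : a ∈ B \ Q := by rw [hBx]; exact this
        exact (Finset.mem_sdiff.1 this).1
    · intro haB
      by_cases haQ : a ∈ Q
      · have : a ∈ A ∩ Q := by rw [hAB]; exact Finset.mem_inter.2 ⟨haB, haQ⟩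
        exact (Finset.mem_inter.1 this).1
      · have : a ∈ B \ Q := Finset.mem_sdiff.2 ⟨haB, haQ⟩
        rw [hBx] at this
        have : a ∈ A \ Q := by rw [hAx]; exact this
        exact (Finset.mem_sdiff.1 this).1
  have hbound := cross_lemma_finset hq2 hℓ Q hQc ι G ?_ ?_
  · calc F1.card = ∑ x ∈ ι, (F1.filter (fun A => f A = x)).card := hsplit
      _ = ∑ x ∈ ι, (G x).card := Finset.sum_congr rfl fun x _ => (hGcard x).symm
      _ ≤ max (q.choose ℓ) (ι.card * (q-1).choose (ℓ-1)) := hbound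
      _ = max (q.choose ℓ) ((X.card - Q.card) * (q-1).choose (ℓ-1)) := by rw [hιc]
  · intro x hx S hS
    rw [hG] at hS
    obtain ⟨A, hA, rfl⟩ := Finset.mem_image.1 hS
    rw [Finset.mem_filter] at hA
    exact ⟨Finset.inter_subset_right, (hmem A hA.1).2.1⟩
  · intro x hx y hy hxy S hS T hT
    rw [hG] at hS hT
    obtain ⟨A, hA, rfl⟩ := Finset.mem_image.1 hS
    obtain ⟨B, hB, rfl⟩ := Finset.mem_image.1 hT
    have hAx := hrecover x A hA
    have hBy := hrecover y B hB
    rw [Finset.mem_filter] at hA hB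
    have hnd := hint A hA.1 B hB.1
    rw [Finset.not_disjoint_iff] at hnd ⊢
    obtain ⟨a, haA, haB⟩ := hnd
    have haQ : a ∈ Q := by
      by_contra haQ
      have h1 : a ∈ A \ Q := Finset.mem_sdiff.2 ⟨haA, haQ⟩
      have h2 : a ∈ B \ Q := Finset.mem_sdiff.2 ⟨haB, haQ⟩
      rw [hAx] at h1
      rw [hBy] at h2
      rw [Finset.mem_singleton] at h1 h2
      exact hxy (h1 ▸ h2 ▸ rfl)
    exact ⟨a, Finset.mem_inter.2 ⟨haA, haQ⟩, Finset.mem_inter.2 ⟨haB, haQ⟩⟩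

lemma upper_bound {n k s : ℕ} (hk : 2 ≤ k) (hs : 1 ≤ s) (hn : (s+1)*k ≤ n)
    (F : Finset (Finset ℕ)) (hF : F ⊆ (Finset.Icc 1 n).powersetCard k)
    (hM : MatchingLE F s) (hQ : HasClique n F k (s*k+k-2)) :
    F.card ≤ max ((s*k+k-1).choose k)
      ((s*k+k-2).choose k + (s*k+k-3).choose (k-2) * (n - (s*k+k-2))) := by
  classical
  obtain ⟨Q, hQX, hQc, hQF⟩ := hQ
  have hsk : k ≤ s * k := Nat.le_mul_of_pos_left k hs
  have hsk1 : (s-1)*k = s*k - k := by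
    rw [Nat.sub_mul, one_mul]
  rw [Nat.add_mul, Nat.one_mul] at hn
  set q := s*k+k-2 with hqdef
  have hq2 : 2*(k-1) ≤ q := by omega
  have hFmem : ∀ A ∈ F, A ⊆ Finset.Icc 1 n ∧ A.card = k := fun A hA =>
    Finset.mem_powersetCard.1 (hF hA)
  -- Step 1: every member has trace at least k-1 on Q
  have htrace : ∀ A ∈ F, k - 1 ≤ (A ∩ Q).card := by
    intro A hA
    by_contra hlt
    push_neg at hlt
    have hQA : s*k ≤ (Q \ A).card := by
      have h0 := Finset.card_sdiff_add_card_inter Q A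
      have h1 : (Q ∩ A).card ≤ k - 2 := by
        rw [Finset.inter_comm]; omega
      omega
    obtain ⟨M, hMd, hMc, hMm⟩ := exists_disjoint_family k (by omega) s (Q \ A) hQA
    have hAne : A.Nonempty := Finset.card_pos.1 (by rw [(hFmem A hA).2]; omega)
    have hAM : A ∉ M := by
      intro hAM
      obtain ⟨a, ha⟩ := hAne
      exact (Finset.mem_sdiff.1 ((hMm A hAM).1 ha)).2 ha
    have hsub : insert A M ⊆ F := by
      intro B hB
      rcases Finset.mem_insert.1 hB with rfl | hB
      · exact hA
      · exact hQF (Finset.mem_powersetCard.2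
          ⟨((hMm B hB).1).trans Finset.sdiff_subset, (hMm B hB).2⟩)
    have hd : ((insert A M : Finset (Finset ℕ)) : Set (Finset ℕ)).PairwiseDisjoint id := by
      rw [Finset.coe_insert]
      refine hMd.insert fun B hB _ => ?_
      exact Finset.disjoint_left.2 fun a haA haB =>
        (Finset.mem_sdiff.1 ((hMm B hB).1 haB)).2 haA
    have := hM _ hsub hd
    rw [Finset.card_insert_of_notMem hAM, hMc] at this
    omega
  -- characterization of subsets of Q
  have hsubQ : ∀ A ∈ F, ((A ∩ Q).card = k ↔ A ⊆ Q) := by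
    intro A hA
    constructor
    · intro h
      have h1 : A ∩ Q = A := Finset.eq_of_subset_of_card_le Finset.inter_subset_left
        (by rw [h, (hFmem A hA).2])
      rw [← h1]
      exact Finset.inter_subset_right
    · intro h
      rw [Finset.inter_eq_left.2 h, (hFmem A hA).2]
  set F0 := F.filter (fun A => A ⊆ Q) with hF0
  set F1 := F.filter (fun A => ¬ A ⊆ Q) with hF1
  have hcardsplit : F0.card + F1.card = F.card :=
    Finset.card_filter_add_card_filter_not _
  have hF0le : F0.card ≤ q.choose k := by
    have : F0 ⊆ Q.powersetCard k := by
      intro A hA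
      rw [Finset.mem_filter] at hA
      exact Finset.mem_powersetCard.2 ⟨hA.2, (hFmem A hA.1).2⟩
    calc F0.card ≤ (Q.powersetCard k).card := Finset.card_le_card this
      _ = q.choose k := by rw [Finset.card_powersetCard, hQc]
  -- F1 members
  have hF1mem : ∀ A ∈ F1, A ⊆ Finset.Icc 1 n ∧ (A ∩ Q).card = k-1 ∧ (A \ Q).card = 1 := by
    intro A hA
    rw [hF1, Finset.mem_filter] at hA
    have h1 := htrace A hA.1
    have h2 : (A ∩ Q).card ≤ k :=
      le_trans (Finset.card_le_card Finset.inter_subset_left) (hFmem A hA.1).2.le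
    have h3 : (A ∩ Q).card ≠ k := fun h => hA.2 ((hsubQ A hA.1).1 h)
    have h4 : (A ∩ Q).card = k - 1 := by omega
    have h5 := Finset.card_inter_add_card_sdiff A Q
    have h6 := (hFmem A hA.1).2
    exact ⟨(hFmem A hA.1).1, h4, by omega⟩
  -- F1 is intersecting
  have hF1int : ∀ A ∈ F1, ∀ B ∈ F1, ¬ Disjoint A B := by
    intro A hA B hB hdis
    have hAF : A ∈ F := Finset.mem_of_mem_filter A hA
    have hBF : B ∈ F := Finset.mem_of_mem_filter B hB
    have hAne : A.Nonempty := Finset.card_pos.1 (by rw [(hFmem A hAF).2]; omega)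
    have hAB : A ≠ B := by
      rintro rfl
      rw [Finset.disjoint_self_iff_empty] at hdis
      rw [hdis] at hAne
      exact Finset.not_nonempty_empty hAne
    have hQAB : (s-1)*k ≤ (Q \ (A ∪ B)).card := by
      have h0 := Finset.card_sdiff_add_card_inter Q (A ∪ B)
      have h1 : Q ∩ (A ∪ B) ⊆ (A ∩ Q) ∪ (B ∩ Q) := by
        intro a ha
        rw [Finset.mem_inter, Finset.mem_union] at ha
        rcases ha.2 with h | h
        · exact Finset.mem_union_left _ (Finset.mem_inter.2 ⟨h, ha.1⟩)
        · exact Finset.mem_union_right _ (Finset.mem_inter.2 ⟨h, ha.1⟩)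
      have h2 : (Q ∩ (A ∪ B)).card ≤ (k-1) + (k-1) := by
        calc (Q ∩ (A ∪ B)).card ≤ ((A ∩ Q) ∪ (B ∩ Q)).card := Finset.card_le_card h1
          _ ≤ (A ∩ Q).card + (B ∩ Q).card := Finset.card_union_le _ _
          _ = (k-1) + (k-1) := by rw [(hF1mem A hA).2.1, (hF1mem B hB).2.1]
      omega
    obtain ⟨M, hMd, hMc, hMm⟩ := exists_disjoint_family k (by omega) (s-1) (Q \ (A ∪ B)) hQAB
    have hnotmem : ∀ C, C.Nonempty → (C ⊆ A ∨ C ⊆ B) → C ∉ M := by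
      intro C hCne hCs hCM
      obtain ⟨a, ha⟩ := hCne
      have := (hMm C hCM).1 ha
      rw [Finset.mem_sdiff, Finset.mem_union] at this
      rcases hCs with h | h
      · exact this.2 (Or.inl (h ha))
      · exact this.2 (Or.inr (h ha))
    have hBne : B.Nonempty := Finset.card_pos.1 (by rw [(hFmem B hBF).2]; omega)
    have hBM : B ∉ M := hnotmem B hBne (Or.inr (le_refl B)) 
    have hAM : A ∉ insert B M := by
      rw [Finset.mem_insert]
      rintro (rfl | hAM)
      · exact hAB rfl
      · exact hnotmem A hAne (Or.inl (le_refl A)) hAM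
    have hsub : insert A (insert B M) ⊆ F := by
      intro C hC
      rcases Finset.mem_insert.1 hC with rfl | hC
      · exact hAF
      rcases Finset.mem_insert.1 hC with rfl | hC
      · exact hBF
      · exact hQF (Finset.mem_powersetCard.2
          ⟨((hMm C hC).1).trans Finset.sdiff_subset, (hMm C hC).2⟩)
    have hdisj : ∀ C ∈ M, Disjoint C A ∧ Disjoint C B := by
      intro C hC
      constructor <;> refine Finset.disjoint_left.2 fun a haC haX => ?_
      · have := (Finset.mem_sdiff.1 ((hMm C hC).1 haC)).2
        exact this (Finset.mem_union_left _ haX)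
      · have := (Finset.mem_sdiff.1 ((hMm C hC).1 haC)).2
        exact this (Finset.mem_union_right _ haX)
    have hd : ((insert A (insert B M) : Finset (Finset ℕ)) : Set (Finset ℕ)).PairwiseDisjoint id := by
      rw [Finset.coe_insert, Finset.coe_insert]
      refine (hMd.insert fun C hC _ => ((hdisj C hC).2).symm).insert ?_
      intro C hC _
      rcases hC with rfl | hC
      · exact hdis
      · exact ((hdisj C hC).1).symm
    have hfin := hM _ hsub hd
    rw [Finset.card_insert_of_notMem hAM, Finset.card_insert_of_notMem hBM, hMc] at hfin
    omega
  -- apply boundary bound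
  have hXcard : (Finset.Icc 1 n).card = n := by rw [Nat.card_Icc]; omega
  have hF1le := boundary_bound hq2 (by omega : 1 ≤ k-1) (Finset.Icc 1 n) Q hQX hQc F1
    (fun A hA => hF1mem A hA) hF1int
  rw [hXcard, hQc] at hF1le
  have hkk : k - 1 - 1 = k - 2 := by omega
  rw [hkk] at hF1le
  -- combine
  have hcomb : F.card ≤ q.choose k + max (q.choose (k-1)) ((n - q) * (q-1).choose (k-2)) := by
    calc F.card = F0.card + F1.card := hcardsplit.symm
      _ ≤ q.choose k + max (q.choose (k-1)) ((n - q) * (q-1).choose (k-2)) :=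
          Nat.add_le_add hF0le hF1le
  have e1 : q + 1 = s*k+k-1 := by omega
  have e2 : q - 1 = s*k+k-3 := by omega
  have hchoose : q.choose k + q.choose (k-1) = (s*k+k-1).choose k := by
    rw [← e1]
    have h := Nat.choose_succ_succ' q (k-1)
    rw [Nat.sub_add_cancel (by omega : 1 ≤ k)] at h
    omega
  calc F.card ≤ q.choose k + max (q.choose (k-1)) ((n - q) * (q-1).choose (k-2)) := hcomb
    _ = max (q.choose k + q.choose (k-1)) (q.choose k + (n - q) * (q-1).choose (k-2)) :=
        (max_add_add_left _ _ _).symm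
    _ = max ((s*k+k-1).choose k) ((s*k+k-2).choose k + (s*k+k-3).choose (k-2) * (n - (s*k+k-2))) := by
        rw [hchoose, ← hqdef, e2, Nat.mul_comm (n - q) ((s*k+k-3).choose (k-2))]

lemma constr_a {n k s : ℕ} (hk : 2 ≤ k) (hs : 1 ≤ s) (hn : (s+1)*k ≤ n) :
    ∃ F : Finset (Finset ℕ), F ⊆ (Finset.Icc 1 n).powersetCard k ∧ MatchingLE F s ∧
      HasClique n F k (s*k+k-2) ∧ F.card = (s*k+k-1).choose k := by
  have hsk : k ≤ s*k := Nat.le_mul_of_pos_left k hs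
  rw [Nat.add_mul, one_mul] at hn
  refine ⟨(Finset.Icc 1 (s*k+k-1)).powersetCard k, ?_, ?_, ?_, ?_⟩
  · exact Finset.powersetCard_mono (Finset.Icc_subset_Icc_right (by omega))
  · intro M hMF hMd
    have hmem : ∀ A ∈ M, A ⊆ Finset.Icc 1 (s*k+k-1) ∧ A.card = k := fun A hA =>
      Finset.mem_powersetCard.1 (hMF hA)
    have h1 : M.card * k ≤ (Finset.Icc 1 (s*k+k-1)).card := card_mul_le_of_disjoint hMd hmem
    rw [Nat.card_Icc] at h1
    by_contra hc
    push_neg at hc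
    have h2 : (s+1) * k ≤ M.card * k := Nat.mul_le_mul_right k hc
    rw [Nat.add_mul, one_mul] at h2
    omega
  · refine ⟨Finset.Icc 1 (s*k+k-2), Finset.Icc_subset_Icc_right (by omega), ?_, ?_⟩
    · rw [Nat.card_Icc]; omega
    · exact Finset.powersetCard_mono (Finset.Icc_subset_Icc_right (by omega))
  · rw [Finset.card_powersetCard, Nat.card_Icc, Nat.add_sub_cancel]

lemma constr_b {n k s : ℕ} (hk : 2 ≤ k) (hs : 1 ≤ s) (hn : (s+1)*k ≤ n) :
    ∃ F : Finset (Finset ℕ), F ⊆ (Finset.Icc 1 n).powersetCard k ∧ MatchingLE F s ∧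
      HasClique n F k (s*k+k-2) ∧
      F.card = (s*k+k-2).choose k + (s*k+k-3).choose (k-2) * (n - (s*k+k-2)) := by
  classical
  have hsk : k ≤ s*k := Nat.le_mul_of_pos_left k hs
  rw [Nat.add_mul, one_mul] at hn
  set q := s*k+k-2 with hqdef
  have hq2 : 2 ≤ q := by omega
  have hqn : q + 2 ≤ n := by omega
  set Qs := Finset.Icc 1 q with hQs
  set F2 := ((Finset.Icc 1 n).powersetCard k).filter
    (fun A => 1 ∈ A ∧ (A ∩ Qs).card = k-1) with hF2
  set Fb := Qs.powersetCard k ∪ F2 with hFb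
  -- basic membership facts
  have hQsn : Qs ⊆ Finset.Icc 1 n := Finset.Icc_subset_Icc_right (by omega)
  have hFbsub : Fb ⊆ (Finset.Icc 1 n).powersetCard k := by
    rw [hFb]
    refine Finset.union_subset (Finset.powersetCard_mono hQsn) (Finset.filter_subset _ _)
  have hFbmem : ∀ A ∈ Fb, A ⊆ Finset.Icc 1 n ∧ A.card = k := fun A hA =>
    Finset.mem_powersetCard.1 (hFbsub hA)
  -- intersection with Ioc
  have hIocIcc : ∀ A : Finset ℕ, A ∩ Finset.Ioc 1 q = (A ∩ Qs).erase 1 := by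
    intro A
    ext a
    simp only [Finset.mem_inter, Finset.mem_Ioc, Finset.mem_erase, Finset.mem_Icc, hQs]
    constructor
    · rintro ⟨h1, h2, h3⟩
      exact ⟨by omega, h1, by omega, h3⟩
    · rintro ⟨h1, h2, h3, h4⟩
      exact ⟨h2, by omega, h4⟩
  refine ⟨Fb, hFbsub, ?_, ?_, ?_⟩
  -- MatchingLE
  · intro M hMF hMd
    by_contra hc
    push_neg at hc
    set M0 := M.filter (fun A => ¬ 1 ∈ A) with hM0
    set M1 := M.filter (fun A => 1 ∈ A) with hM1
    have hsplitM : M1.card + M0.card = M.card :=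
      Finset.card_filter_add_card_filter_not _
    have hM1le : M1.card ≤ 1 := by
      by_contra h1
      push_neg at h1
      obtain ⟨A, hA, B, hB, hAB⟩ := Finset.one_lt_card.1 h1
      rw [hM1, Finset.mem_filter] at hA hB
      have hd := hMd (Finset.mem_coe.2 hA.1) (Finset.mem_coe.2 hB.1) hAB
      exact (Finset.disjoint_left.1 hd hA.2) hB.2
    have hM0mem : ∀ A ∈ M0, A ⊆ Finset.Ioc 1 q ∧ A.card = k := by
      intro A hA
      rw [hM0, Finset.mem_filter] at hA
      have hAFb := hMF hA.1
      rw [hFb, Finset.mem_union] at hAFb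
      rcases hAFb with h | h
      · rw [Finset.mem_powersetCard] at h
        refine ⟨?_, h.2⟩
        intro a ha
        have h2 := h.1 ha
        rw [hQs, Finset.mem_Icc] at h2
        have h3 : a ≠ 1 := fun he => hA.2 (he ▸ ha)
        rw [Finset.mem_Ioc]
        omega
      · rw [hF2, Finset.mem_filter] at h
        exact absurd h.2.1 hA.2
    have hM0d : (M0 : Set (Finset ℕ)).PairwiseDisjoint id :=
      hMd.subset (by intro A hA; exact Finset.mem_coe.2 (Finset.mem_of_mem_filter A hA))
    have hM0b : M0.card * k ≤ (Finset.Ioc 1 q).card := card_mul_le_of_disjoint hM0d hM0mem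
    rw [Nat.card_Ioc] at hM0b
    have hM0c : s ≤ M0.card := by omega
    have hmul : s * k ≤ M0.card * k := Nat.mul_le_mul_right k hM0c
    rcases M1.eq_empty_or_nonempty with hM1e | hM1ne
    · have hM0eq : s + 1 ≤ M0.card := by
        rw [hM1e, Finset.card_empty] at hsplitM
        omega
      have h2 : (s+1)*k ≤ M0.card * k := Nat.mul_le_mul_right k hM0eq
      rw [Nat.add_mul, one_mul] at h2
      omega
    · obtain ⟨A1, hA1⟩ := hM1ne
      rw [hM1, Finset.mem_filter] at hA1
      -- trace of A1 on Ioc 1 q has at least k-2 elements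
      have hA1b : k - 2 ≤ (A1 ∩ Finset.Ioc 1 q).card := by
        have hQsc : k - 1 ≤ (A1 ∩ Qs).card := by
          have hAFb := hMF hA1.1
          rw [hFb, Finset.mem_union] at hAFb
          rcases hAFb with h | h
          · rw [Finset.mem_powersetCard] at h
            rw [Finset.inter_eq_left.2 h.1, h.2]
            omega
          · rw [hF2, Finset.mem_filter] at h
            rw [h.2.2]
        have := Finset.pred_card_le_card_erase (s := A1 ∩ Qs) (a := 1)
        rw [hIocIcc A1]
        omega
      have h1 : M0.card * k ≤ (M0.biUnion id).card :=
        card_mul_le_of_disjoint hM0d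
          (fun A hA => ⟨Finset.subset_biUnion_of_mem id hA, (hM0mem A hA).2⟩)
      have hdisN : Disjoint (M0.biUnion id) (A1 ∩ Finset.Ioc 1 q) := by
        rw [Finset.disjoint_left]
        intro a ha hain
        rw [Finset.mem_biUnion] at ha
        obtain ⟨C, hC, haC⟩ := ha
        have hCM : C ∈ M := Finset.mem_of_mem_filter C hC
        have hCA1 : C ≠ A1 := by
          rintro rfl
          exact (Finset.mem_filter.1 hC).2 hA1.2
        have hd := hMd (Finset.mem_coe.2 hCM) (Finset.mem_coe.2 hA1.1) hCA1
        exact (Finset.disjoint_left.1 hd haC) (Finset.mem_inter.1 hain).1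
      have hNsub : M0.biUnion id ∪ (A1 ∩ Finset.Ioc 1 q) ⊆ Finset.Ioc 1 q :=
        Finset.union_subset (Finset.biUnion_subset.2 fun C hC => (hM0mem C hC).1)
          Finset.inter_subset_right
      have hNcard := Finset.card_union_of_disjoint hdisN
      have hNle : (M0.biUnion id ∪ (A1 ∩ Finset.Ioc 1 q)).card ≤ q - 1 := by
        have := Finset.card_le_card hNsub
        rwa [Nat.card_Ioc] at this
      omega
  -- HasClique
  · refine ⟨Qs, hQsn, by rw [hQs, Nat.card_Icc]; omega, ?_⟩
    rw [hFb]
    exact Finset.subset_union_left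
  -- cardinality
  · have hdisj : Disjoint (Qs.powersetCard k) F2 := by
      rw [Finset.disjoint_left]
      intro A hA hA2
      rw [Finset.mem_powersetCard] at hA
      rw [hF2, Finset.mem_filter] at hA2
      have : (A ∩ Qs).card = k := by rw [Finset.inter_eq_left.2 hA.1, hA.2]
      omega
    rw [hFb, Finset.card_union_of_disjoint hdisj, Finset.card_powersetCard, hQs, Nat.card_Icc,
      Nat.add_sub_cancel]
    congr 1
    -- card F2 = (q-1).choose (k-2) * (n - q)
    have hbij : F2.card = (((Finset.Ioc 1 q).powersetCard (k-2)) ×ˢ (Finset.Ioc q n)).card := by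
      apply Finset.card_bij' (fun A _ => (A ∩ Finset.Ioc 1 q, (A \ Qs).sum id))
        (fun p _ => insert p.2 (insert 1 p.1))
      -- i maps into target
      · intro A hA
        rw [hF2, Finset.mem_filter, Finset.mem_powersetCard] at hA
        obtain ⟨⟨hAX, hAk⟩, h1A, hAQ⟩ := hA
        have hsd : (A \ Qs).card = 1 := by
          have := Finset.card_inter_add_card_sdiff A Qs
          omega
        obtain ⟨y, hy⟩ := Finset.card_eq_one.1 hsd
        have hyA : y ∈ A \ Qs := by rw [hy]; exact Finset.mem_singleton_self y
        rw [Finset.mem_sdiff, hQs, Finset.mem_Icc] at hyA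
        have hyn : y ∈ Finset.Icc 1 n := hAX hyA.1
        rw [Finset.mem_Icc] at hyn
        rw [Finset.mem_product]
        constructor
        · rw [Finset.mem_powersetCard]
          refine ⟨Finset.inter_subset_right, ?_⟩
          have h1m : 1 ∈ A ∩ Qs := Finset.mem_inter.2
            ⟨h1A, by rw [hQs, Finset.mem_Icc]; omega⟩
          rw [hIocIcc A, Finset.card_erase_of_mem h1m, hAQ]
          omega
        · rw [hy, Finset.sum_singleton, Finset.mem_Ioc]
          simp only [id]
          omega
      -- j maps into source
      · intro p hp
        obtain ⟨T, y⟩ := p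
        rw [Finset.mem_product, Finset.mem_powersetCard, Finset.mem_Ioc] at hp
        obtain ⟨⟨hT, hTc⟩, hy1, hy2⟩ := hp
        have hTmem : ∀ a ∈ T, 1 < a ∧ a ≤ q := by
          intro a ha; have := hT ha; rwa [Finset.mem_Ioc] at this
        have h1T : 1 ∉ T := fun h => by
          have := hTmem 1 h; omega
        have hyT : y ∉ insert 1 T := by
          rw [Finset.mem_insert]
          rintro (rfl | h)
          · omega
          · have := hTmem y h; omega
        rw [hF2, Finset.mem_filter, Finset.mem_powersetCard]
        refine ⟨⟨?_, ?_⟩, ?_, ?_⟩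
        · intro a ha
          rw [Finset.mem_insert, Finset.mem_insert] at ha
          rw [Finset.mem_Icc]
          rcases ha with rfl | rfl | h
          · omega
          · omega
          · have := hTmem a h; omega
        · rw [Finset.card_insert_of_notMem hyT, Finset.card_insert_of_notMem h1T, hTc]
          omega
        · exact Finset.mem_insert_of_mem (Finset.mem_insert_self 1 T)
        · have heq : insert y (insert 1 T) ∩ Qs = insert 1 T := by
            ext a
            simp only [Finset.mem_inter, Finset.mem_insert, hQs, Finset.mem_Icc]
            constructor
            · rintro ⟨rfl | rfl | h, h1, h2⟩
              · omega
              · exact Or.inl rfl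
              · exact Or.inr h
            · rintro (rfl | h)
              · exact ⟨Or.inr (Or.inl rfl), le_refl 1, by omega⟩
              · have := hTmem a h
                exact ⟨Or.inr (Or.inr h), by omega, by omega⟩
          rw [heq, Finset.card_insert_of_notMem h1T, hTc]
          omega
      -- j ∘ i = id
      · intro A hA
        rw [hF2, Finset.mem_filter, Finset.mem_powersetCard] at hA
        obtain ⟨⟨hAX, hAk⟩, h1A, hAQ⟩ := hA
        have hsd : (A \ Qs).card = 1 := by
          have := Finset.card_inter_add_card_sdiff A Qs
          omega
        obtain ⟨y, hy⟩ := Finset.card_eq_one.1 hsd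
        have hyA : y ∈ A \ Qs := by rw [hy]; exact Finset.mem_singleton_self y
        rw [Finset.mem_sdiff, hQs, Finset.mem_Icc] at hyA
        rw [hy, Finset.sum_singleton]
        simp only [id]
        ext a
        rw [Finset.mem_insert, Finset.mem_insert, Finset.mem_inter, Finset.mem_Ioc]
        constructor
        · rintro (rfl | rfl | ⟨h1, h2, h3⟩)
          · exact hyA.1
          · exact h1A
          · exact h1
        · intro haA
          by_cases haQ : a ∈ Qs
          · rw [hQs, Finset.mem_Icc] at haQ
            rcases Nat.eq_or_lt_of_le haQ.1 with h | h
            · exact Or.inr (Or.inl h.symm)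
            · exact Or.inr (Or.inr ⟨haA, h, haQ.2⟩)
          · have : a ∈ A \ Qs := Finset.mem_sdiff.2 ⟨haA, haQ⟩
            rw [hy, Finset.mem_singleton] at this
            exact Or.inl this
      -- i ∘ j = id
      · intro p hp
        obtain ⟨T, y⟩ := p
        rw [Finset.mem_product, Finset.mem_powersetCard, Finset.mem_Ioc] at hp
        obtain ⟨⟨hT, hTc⟩, hy1, hy2⟩ := hp
        have hTmem : ∀ a ∈ T, 1 < a ∧ a ≤ q := by
          intro a ha; have := hT ha; rwa [Finset.mem_Ioc] at this
        have e1 : insert y (insert 1 T) ∩ Finset.Ioc 1 q = T := by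
          ext a
          rw [Finset.mem_inter, Finset.mem_insert, Finset.mem_insert, Finset.mem_Ioc]
          constructor
          · rintro ⟨rfl | rfl | h, h1, h2⟩
            · omega
            · omega
            · exact h
          · intro h
            have := hTmem a h
            exact ⟨Or.inr (Or.inr h), this.1, this.2⟩
        have e2 : insert y (insert 1 T) \ Qs = {y} := by
          ext a
          rw [Finset.mem_sdiff, Finset.mem_insert, Finset.mem_insert, hQs, Finset.mem_Icc,
            Finset.mem_singleton]
          constructor
          · rintro ⟨rfl | rfl | h, h2⟩
            · rfl
            · omega
            · have := hTmem a h; omega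
          · rintro rfl
            exact ⟨Or.inl rfl, by omega⟩
        simp only [e1, e2, Finset.sum_singleton, id]
    rw [hbij, Finset.card_product, Finset.card_powersetCard, Nat.card_Ioc, Nat.card_Ioc]
    have e3 : q - 1 = s*k+k-3 := by omega
    rw [e3]

theorem stmt_14 (n k s : ℕ) (hk : 2 ≤ k) (hs : 1 ≤ s) (hn : (s + 1) * k ≤ n) :
    IsGreatest
      {m : ℕ | ∃ F : Finset (Finset ℕ),
        F ⊆ (Finset.Icc 1 n).powersetCard k ∧ MatchingLE F s ∧
          HasClique n F k (s * k + k - 2) ∧ F.card = m}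
      (max ((s * k + k - 1).choose k)
        ((s * k + k - 2).choose k +
          (s * k + k - 3).choose (k - 2) * (n - (s * k + k - 2)))) := by
  constructor
  · rcases le_total ((s*k+k-1).choose k)
      ((s*k+k-2).choose k + (s*k+k-3).choose (k-2) * (n - (s*k+k-2))) with h | h
    · rw [max_eq_right h]
      obtain ⟨F, h1, h2, h3, h4⟩ := constr_b hk hs hn
      exact ⟨F, h1, h2, h3, h4⟩
    · rw [max_eq_left h]
      obtain ⟨F, h1, h2, h3, h4⟩ := constr_a hk hs hn
      exact ⟨F, h1, h2, h3, h4⟩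
  · rintro m ⟨F, hF, hM, hQ, rfl⟩
    exact upper_bound hk hs hn F hF hM hQ
end

section
/- Let F be a shifted family of k-subsets of {1,...,n} of maximum size subject to having matching number exactly s and clique number exactly q. If F is reducible, i.e. the subfamily F(1̄) of sets avoiding the element 1 has matching number s-1, then m*(n,q,k,s) = C(n-1, k-1) + m*(n-1, q-1, k, s-1). -/
open Finset

/-- The matching number of `F` equals `s`. -/
def MatchingEq (F : Finset (Finset ℕ)) (s : ℕ) : Prop :=
  MatchingLE F s ∧ HasMatching F s

/-- The clique number of `F` equals `q`. -/
def CliqueEq (n : ℕ) (F : Finset (Finset ℕ)) (k q : ℕ) : Prop :=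
  HasClique n F k q ∧ ¬ HasClique n F k (q + 1)

/-- `m*(n,q,k,s)`: maximum size of a shifted `k`-graph on `{1,…,n}` with
matching number `s` and clique number `q`. -/
noncomputable def mstar (n q k s : ℕ) : ℕ :=
  sSup {m : ℕ | ∃ F : Finset (Finset ℕ),
    F ⊆ (Finset.Icc 1 n).powersetCard k ∧ IsShifted n F ∧
      MatchingEq F s ∧ CliqueEq n F k q ∧ F.card = m}

/-! ### Infrastructure -/

lemma shiftLE_card {A B : Finset ℕ} (h : shiftLE A B) : A.card = B.card := by
  have := h.length_eq
  simpa [Finset.length_sort] using this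

theorem List.eq_of_perm_of_sorted {α : Type*} {r : α → α → Prop} [Std.Antisymm r]
    {l₁ l₂ : List α} (hp : l₁.Perm l₂) (h1 : l₁.Pairwise r) (h2 : l₂.Pairwise r) :
    l₁ = l₂ :=
  hp.eq_of_pairwise' h1 h2

lemma sort_image {A : Finset ℕ} {f : ℕ → ℕ}
    (hf : ∀ a ∈ A, ∀ b ∈ A, a < b → f a < f b) :
    (A.image f).sort (· ≤ ·) = (A.sort (· ≤ ·)).map f := by
  have hinj : ∀ a ∈ A.sort (· ≤ ·), ∀ b ∈ A.sort (· ≤ ·), f a = f b → a = b := by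
    intro a ha b hb hab
    simp only [Finset.mem_sort] at ha hb
    rcases lt_trichotomy a b with h | h | h
    · exact absurd hab (hf a ha b hb h).ne
    · exact h
    · exact absurd hab.symm (hf b hb a ha h).ne
  apply List.eq_of_perm_of_sorted (r := (· ≤ · : ℕ → ℕ → Prop))
  · apply List.perm_of_nodup_nodup_toFinset_eq (Finset.sort_nodup _ _)
    · exact ((Finset.sort_nodup A _).map_on hinj)
    · ext x
      simp [List.mem_map, Finset.mem_sort, Finset.mem_image]
  · exact Finset.pairwise_sort _ _
  · rw [List.pairwise_map]
    exact (Finset.sortedLT_sort A).pairwise.imp_of_mem (fun {a b} ha hb h =>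
      (hf a (by simpa using (Finset.mem_sort _).mp ha) b
        (by simpa using (Finset.mem_sort _).mp hb) h).le)

lemma sort_sublist {A B : Finset ℕ} (h : A ⊆ B) :
    (A.sort (· ≤ ·)).Sublist (B.sort (· ≤ ·)) := by
  have hsub : (A.sort (· ≤ ·)).Subperm (B.sort (· ≤ ·)) :=
    (Finset.sort_nodup A _).subperm
      (by intro x hx; exact (Finset.mem_sort (r := (· ≤ ·))).mpr (h ((Finset.mem_sort (r := (· ≤ ·))).mp hx)))
  obtain ⟨l, hperm, hsl⟩ := hsub
  have hlsorted : l.Pairwise (· ≤ ·) := (Finset.pairwise_sort B _).sublist hsl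
  have : l = A.sort (· ≤ ·) :=
    List.eq_of_perm_of_sorted hperm hlsorted (Finset.pairwise_sort _ _)
  exact this ▸ hsl

lemma forall₂_cons_of_sublist : ∀ (m l : List ℕ) (x : ℕ), l.Sublist m →
    m.length = l.length + 1 → m.Pairwise (· < ·) → (∀ y ∈ m, x ≤ y) →
    List.Forall₂ (· ≤ ·) (x :: l) m := by
  intro m
  induction m with
  | nil => intro l x h hlen; simp at hlen
  | cons a m' ih =>
    intro l x hsl hlen hsort hx
    cases hsl
    case cons h' =>
      have hle : l = m' := h'.eq_of_length (by simp at hlen; omega)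
      subst hle
      exact List.Forall₂.cons (hx a (by simp))
        (List.forall₂_same.mpr (fun y _ => le_refl y))
    case cons_cons l' h' =>
      refine List.Forall₂.cons (hx a (by simp)) ?_
      exact ih l' a h' (by simpa using hlen) hsort.of_cons
        (fun y hy => ((List.pairwise_cons.mp hsort).1 y hy).le)

lemma sort_insert_one {S : Finset ℕ} (hS : ∀ x ∈ S, 2 ≤ x) :
    (insert 1 S).sort (· ≤ ·) = 1 :: S.sort (· ≤ ·) := by
  apply List.eq_of_perm_of_sorted (r := (· ≤ · : ℕ → ℕ → Prop))
  · apply List.perm_of_nodup_nodup_toFinset_eq (Finset.sort_nodup _ _)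
    · refine List.nodup_cons.mpr ⟨?_, Finset.sort_nodup _ _⟩
      intro h
      have := hS 1 ((Finset.mem_sort _).mp h)
      omega
    · ext x; simp [Finset.mem_sort]
  · exact Finset.pairwise_sort _ _
  · refine List.pairwise_cons.mpr ⟨?_, Finset.pairwise_sort _ _⟩
    intro b hb
    have := hS b ((Finset.mem_sort _).mp hb); omega

/-- shift up by one -/
def fup (A : Finset ℕ) : Finset ℕ := A.image (· + 1)
/-- shift down by one -/
def fdn (A : Finset ℕ) : Finset ℕ := A.image (· - 1)

lemma mem_fup {A : Finset ℕ} {x : ℕ} : x ∈ fup A ↔ ∃ a ∈ A, a + 1 = x := by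
  simp [fup]

lemma mem_fdn {A : Finset ℕ} {x : ℕ} : x ∈ fdn A ↔ ∃ a ∈ A, a - 1 = x := by
  simp [fdn]

lemma fdn_fup (A : Finset ℕ) : fdn (fup A) = A := by
  ext x; simp [fup, fdn]

lemma fup_fdn {A : Finset ℕ} (hA : ∀ a ∈ A, 1 ≤ a) : fup (fdn A) = A := by
  ext x
  simp only [fup, fdn, Finset.mem_image]
  constructor
  · rintro ⟨y, ⟨a, ha, rfl⟩, rfl⟩
    have := hA a ha
    simpa [Nat.sub_add_cancel this] using ha
  · intro hx
    exact ⟨x - 1, ⟨x, hx, rfl⟩, Nat.sub_add_cancel (hA x hx)⟩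

lemma card_fup (A : Finset ℕ) : (fup A).card = A.card :=
  Finset.card_image_of_injective _ (fun a b => by omega)

lemma card_fdn {A : Finset ℕ} (hA : ∀ a ∈ A, 1 ≤ a) : (fdn A).card = A.card := by
  have := card_fup (fdn A)
  rw [fup_fdn hA] at this; omega

lemma fup_injective : Function.Injective fup :=
  Finset.image_injective (fun a b => by omega)

lemma sort_fup (A : Finset ℕ) :
    (fup A).sort (· ≤ ·) = (A.sort (· ≤ ·)).map (· + 1) :=
  sort_image (fun a _ b _ h => by omega)

lemma shiftLE_fup {A B : Finset ℕ} : shiftLE (fup A) (fup B) ↔ shiftLE A B := by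
  unfold shiftLE
  rw [sort_fup, sort_fup, List.forall₂_map_left_iff, List.forall₂_map_right_iff]
  constructor <;> exact fun h => h.imp (fun {a b} hab => by simp at hab ⊢; omega)

lemma disjoint_fup {A B : Finset ℕ} : Disjoint (fup A) (fup B) ↔ Disjoint A B :=
  Finset.disjoint_image (fun a b => by omega)

lemma pd_fup {M : Finset (Finset ℕ)} :
    ((M.image fup : Finset (Finset ℕ)) : Set (Finset ℕ)).PairwiseDisjoint id ↔
      (M : Set (Finset ℕ)).PairwiseDisjoint id := by
  constructor
  · intro h A hA B hB hne
    have := h (Finset.mem_coe.mpr (Finset.mem_image_of_mem fup hA))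
      (Finset.mem_coe.mpr (Finset.mem_image_of_mem fup hB))
      (fun e => hne (fup_injective e))
    simpa [Function.onFun, disjoint_fup] using this
  · intro h X hX Y hY hne
    simp only [Finset.mem_coe, Finset.mem_image] at hX hY
    obtain ⟨A, hA, rfl⟩ := hX
    obtain ⟨B, hB, rfl⟩ := hY
    have hAB : A ≠ B := fun e => hne (by rw [e])
    have := h hA hB hAB
    simpa [Function.onFun, disjoint_fup] using this

lemma matchingLE_fup {G : Finset (Finset ℕ)} {t : ℕ} :
    MatchingLE (G.image fup) t ↔ MatchingLE G t := by
  constructor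
  · intro h M hM hpd
    have := h (M.image fup) (Finset.image_subset_image hM) (pd_fup.mpr hpd)
    rwa [Finset.card_image_of_injective _ fup_injective] at this
  · intro h M hM hpd
    have hmem : ∀ X ∈ M, fup (fdn X) = X ∧ fdn X ∈ G := by
      intro X hX
      obtain ⟨A, hA, rfl⟩ := Finset.mem_image.mp (hM hX)
      rw [fdn_fup]; exact ⟨rfl, hA⟩
    have hMeq : M = (M.image fdn).image fup := by
      ext X
      simp only [Finset.mem_image]
      constructor
      · intro hX; exact ⟨fdn X, ⟨X, hX, rfl⟩, (hmem X hX).1⟩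
      · rintro ⟨Y, ⟨X', hX', rfl⟩, rfl⟩
        rwa [(hmem X' hX').1]
    have hMsub : M.image fdn ⊆ G := by
      intro Y hY
      obtain ⟨X, hX, rfl⟩ := Finset.mem_image.mp hY
      exact (hmem X hX).2
    have hpd' : ((M.image fdn : Finset (Finset ℕ)) : Set (Finset ℕ)).PairwiseDisjoint id := by
      rw [← pd_fup, ← hMeq]; exact hpd
    have := h _ hMsub hpd'
    have hcard : (M.image fdn).card = M.card := by
      conv_rhs => rw [hMeq]
      rw [Finset.card_image_of_injective _ fup_injective]
    omega

lemma hasMatching_fup {G : Finset (Finset ℕ)} {t : ℕ} :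
    HasMatching (G.image fup) t ↔ HasMatching G t := by
  constructor
  · rintro ⟨M, hM, hpd, hcard⟩
    have hmem : ∀ X ∈ M, fup (fdn X) = X ∧ fdn X ∈ G := by
      intro X hX
      obtain ⟨A, hA, rfl⟩ := Finset.mem_image.mp (hM hX)
      rw [fdn_fup]; exact ⟨rfl, hA⟩
    have hMeq : M = (M.image fdn).image fup := by
      ext X
      simp only [Finset.mem_image]
      constructor
      · intro hX; exact ⟨fdn X, ⟨X, hX, rfl⟩, (hmem X hX).1⟩
      · rintro ⟨Y, ⟨X', hX', rfl⟩, rfl⟩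
        rwa [(hmem X' hX').1]
    have hMsub : M.image fdn ⊆ G := by
      intro Y hY
      obtain ⟨X, hX, rfl⟩ := Finset.mem_image.mp hY
      exact (hmem X hX).2
    refine ⟨M.image fdn, hMsub, ?_, ?_⟩
    · rw [← pd_fup, ← hMeq]; exact hpd
    · rw [← hcard]; conv_rhs => rw [hMeq]
      rw [Finset.card_image_of_injective _ fup_injective]
  · rintro ⟨M, hM, hpd, hcard⟩
    refine ⟨M.image fup, Finset.image_subset_image hM, pd_fup.mpr hpd, ?_⟩
    rw [Finset.card_image_of_injective _ fup_injective, hcard]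

lemma clique_downset {n q k : ℕ} {F : Finset (Finset ℕ)} (hshift : IsShifted n F)
    (hqn : q ≤ n) {Q : Finset ℕ} (hQ : Q ⊆ Finset.Icc 1 n) (hQc : Q.card = q)
    (hpow : Q.powersetCard k ⊆ F) {S : Finset ℕ} (hS : S ⊆ Finset.Icc 1 q)
    (hSc : S.card = k) : S ∈ F := by
  have hmemS : ∀ a ∈ S, 1 ≤ a ∧ a ≤ q := fun a ha => by
    have := hS ha; simp [Finset.mem_Icc] at this; exact this
  set f := Q.orderEmbOfFin hQc with hf
  have hfg : ∀ (m : ℕ) (h : m < q), m + 1 ≤ f ⟨m, h⟩ := by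
    intro m
    induction m with
    | zero =>
      intro h
      have hm : f ⟨0, h⟩ ∈ Q := Q.orderEmbOfFin_mem hQc _
      have := hQ hm; simp [Finset.mem_Icc] at this; omega
    | succ m ih =>
      intro h
      have h' : m < q := by omega
      have h1 := ih h'
      have h2 : f ⟨m, h'⟩ < f ⟨m + 1, h⟩ := by
        apply f.strictMono; simp [Fin.lt_def]
      omega
  set g : ℕ → ℕ := fun a => if h : a - 1 < q then f ⟨a - 1, h⟩ else a with hg
  have hga : ∀ a ∈ S, ∃ h : a - 1 < q, g a = f ⟨a - 1, h⟩ := by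
    intro a ha
    have := hmemS a ha
    refine ⟨by omega, ?_⟩
    simp only [hg]
    rw [dif_pos]
  have hgmem : ∀ a ∈ S, g a ∈ Q := by
    intro a ha; obtain ⟨h, he⟩ := hga a ha; rw [he]; exact Q.orderEmbOfFin_mem hQc _
  have hgge : ∀ a ∈ S, a ≤ g a := by
    intro a ha
    have h1 := hmemS a ha
    obtain ⟨h, he⟩ := hga a ha
    rw [he]
    have := hfg (a - 1) h
    omega
  have hgmono : ∀ a ∈ S, ∀ b ∈ S, a < b → g a < g b := by
    intro a ha b hb hab
    have h1 := hmemS a ha; have h2 := hmemS b hb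
    obtain ⟨ha', hea⟩ := hga a ha; obtain ⟨hb', heb⟩ := hga b hb
    rw [hea, heb]
    apply f.strictMono
    simp [Fin.lt_def]; omega
  set T := S.image g with hT
  have hTQ : T ⊆ Q := by
    intro x hx; obtain ⟨a, ha, rfl⟩ := Finset.mem_image.mp hx; exact hgmem a ha
  have hTcard : T.card = k := by
    rw [hT, Finset.card_image_of_injOn, hSc]
    intro a ha b hb hab
    rcases lt_trichotomy a b with h | h | h
    · exact absurd hab (hgmono a ha b hb h).ne
    · exact h
    · exact absurd hab.symm (hgmono b hb a ha h).ne
  have hTF : T ∈ F := hpow (Finset.mem_powersetCard.mpr ⟨hTQ, hTcard⟩)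
  apply hshift T hTF S (hS.trans (Finset.Icc_subset_Icc le_rfl hqn))
  unfold shiftLE
  rw [hT, sort_image hgmono, List.forall₂_map_right_iff]
  exact List.forall₂_same.mpr (fun a ha => hgge a ((Finset.mem_sort _).mp ha))

lemma shiftLE_insert_one {S' T : Finset ℕ} (hS' : ∀ x ∈ S', 2 ≤ x)
    (hT1 : ∀ x ∈ T, 1 ≤ x) (hsub : S' ⊆ T) (hc : T.card = S'.card + 1) :
    shiftLE (insert 1 S') T := by
  unfold shiftLE
  rw [sort_insert_one hS']
  apply forall₂_cons_of_sublist _ _ _ (sort_sublist hsub)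
  · rw [Finset.length_sort, Finset.length_sort, hc]
  · exact (Finset.sortedLT_sort T).pairwise
  · intro y hy; exact hT1 y ((Finset.mem_sort _).mp hy)

lemma shiftLE_one_mem {A B : Finset ℕ} (h : shiftLE A B) (h1 : 1 ∈ B)
    (hA : ∀ a ∈ A, 1 ≤ a) : 1 ∈ A := by
  unfold shiftLE at h
  have h1' : (1 : ℕ) ∈ B.sort (· ≤ ·) := (Finset.mem_sort _).mpr h1
  have hAs : ∀ a ∈ A.sort (· ≤ ·), 1 ≤ a :=
    fun a ha => hA a ((Finset.mem_sort _).mp ha)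
  have hsortedB : (B.sort (· ≤ ·)).Pairwise (· ≤ ·) := Finset.pairwise_sort _ _
  suffices hX : (1 : ℕ) ∈ A.sort (· ≤ ·) from (Finset.mem_sort _).mp hX
  generalize hgA : A.sort (· ≤ ·) = la at h hAs ⊢
  generalize hgB : B.sort (· ≤ ·) = lb at h h1' hsortedB
  cases h with
  | nil => simp at h1'
  | cons hab h' =>
    next a b l m =>
    have ha1 : 1 ≤ a := hAs a (by simp)
    have hb1 : b ≤ 1 := by
      rcases List.mem_cons.mp h1' with h | h
      · omega
      · exact (List.pairwise_cons.mp hsortedB).1 1 h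
    have : a = 1 := by omega
    simp [this]

lemma mstar_bdd (n q k s : ℕ) : BddAbove {m : ℕ | ∃ F : Finset (Finset ℕ),
    F ⊆ (Finset.Icc 1 n).powersetCard k ∧ IsShifted n F ∧
      MatchingEq F s ∧ CliqueEq n F k q ∧ F.card = m} := by
  refine ⟨((Finset.Icc 1 n).powersetCard k).card, ?_⟩
  rintro m ⟨F, hF, -, -, -, rfl⟩
  exact Finset.card_le_card hF

lemma card_filter_one {n k : ℕ} (hk : 1 ≤ k) (hn : 1 ≤ n) :
    (((Finset.Icc 1 n).powersetCard k).filter (fun S => 1 ∈ S)).card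
      = (n - 1).choose (k - 1) := by
  have : (((Finset.Icc 1 n).powersetCard k).filter (fun S => 1 ∈ S)).card
      = ((Finset.Icc 2 n).powersetCard (k - 1)).card := by
    apply Finset.card_bij' (fun S _ => S.erase 1) (fun W _ => insert 1 W)
    · intro S hS
      simp only [Finset.mem_filter] at hS
      exact Finset.insert_erase hS.2
    · intro W hW
      simp only [Finset.mem_powersetCard] at hW
      apply Finset.erase_insert
      intro h
      have := hW.1 h; simp [Finset.mem_Icc] at this
    · intro S hS
      simp only [Finset.mem_filter, Finset.mem_powersetCard] at hS
      obtain ⟨⟨hsub, hcard⟩, h1⟩ := hS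
      refine Finset.mem_powersetCard.mpr ⟨?_, ?_⟩
      · intro x hx
        have hx1 := Finset.mem_of_mem_erase hx
        have hxne := Finset.ne_of_mem_erase hx
        have := hsub hx1
        simp only [Finset.mem_Icc] at this ⊢
        omega
      · rw [Finset.card_erase_of_mem h1, hcard]
    · intro W hW
      simp only [Finset.mem_powersetCard] at hW
      obtain ⟨hsub, hcard⟩ := hW
      have h1W : 1 ∉ W := fun h => by
        have := hsub h; simp [Finset.mem_Icc] at this
      refine Finset.mem_filter.mpr ⟨Finset.mem_powersetCard.mpr ⟨?_, ?_⟩, by simp⟩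
      · intro x hx
        rcases Finset.mem_insert.mp hx with rfl | hx
        · simp only [Finset.mem_Icc]; omega
        · have := hsub hx; simp only [Finset.mem_Icc] at this ⊢; omega
      · rw [Finset.card_insert_of_notMem h1W, hcard]; omega
  rw [this, Finset.card_powersetCard, Nat.card_Icc]
  congr 1

theorem stmt_17 (n q k s : ℕ) (hk : 1 ≤ k) (hs : 1 ≤ s) (hq : 1 ≤ q)
    (F : Finset (Finset ℕ))
    (hF : F ⊆ (Finset.Icc 1 n).powersetCard k) (hshift : IsShifted n F)
    (hmatch : MatchingEq F s) (hclq : CliqueEq n F k q)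
    (hmax : F.card = mstar n q k s)
    (hred : MatchingEq (F.filter (fun A => 1 ∉ A)) (s - 1)) :
    mstar n q k s = (n - 1).choose (k - 1) + mstar (n - 1) (q - 1) k (s - 1) := by
  classical
  obtain ⟨hclq1, hclq2⟩ := hclq
  obtain ⟨hmLE, Mw, hMwF, hMwpd, hMwcard⟩ := hmatch
  set F0 := F.filter (fun A => 1 ∉ A) with hF0def
  set F1 := F.filter (fun A => 1 ∈ A) with hF1def
  have hmemF : ∀ A ∈ F, A ⊆ Finset.Icc 1 n ∧ A.card = k :=
    fun A hA => Finset.mem_powersetCard.mp (hF hA)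
  have hFne : ∃ A, A ∈ F := by
    have hw : Mw.Nonempty := Finset.card_pos.mp (by omega)
    obtain ⟨A, hA⟩ := hw; exact ⟨A, hMwF hA⟩
  obtain ⟨A₀, hA₀⟩ := hFne
  have hA₀p := hmemF A₀ hA₀
  have hkn : k ≤ n := by
    have hcc := Finset.card_le_card hA₀p.1
    rwa [hA₀p.2, Nat.card_Icc, Nat.add_sub_cancel] at hcc
  have hn1 : 1 ≤ n := le_trans hk hkn
  have hskn : s * k ≤ n := by
    have hdisj : ∀ X ∈ Mw, ∀ Y ∈ Mw, X ≠ Y → Disjoint (id X) (id Y) :=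
      fun X hX Y hY hne => hMwpd hX hY hne
    have hcard : (Mw.biUnion id).card = ∑ X ∈ Mw, (id X).card := Finset.card_biUnion hdisj
    have hsum : ∑ X ∈ Mw, (id X).card = s * k := by
      have he : ∀ X ∈ Mw, (id X).card = k := fun X hX => (hmemF X (hMwF hX)).2
      rw [Finset.sum_congr rfl he, Finset.sum_const, smul_eq_mul, hMwcard]
    have hsub : Mw.biUnion id ⊆ Finset.Icc 1 n := by
      intro x hx; obtain ⟨X, hX, hxX⟩ := Finset.mem_biUnion.mp hx
      exact (hmemF X (hMwF hX)).1 hxX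
    have hcc := Finset.card_le_card hsub
    rwa [hcard, hsum, Nat.card_Icc, Nat.add_sub_cancel] at hcc
  have hqn : q ≤ n := by
    obtain ⟨Q, hQs, hQc, -⟩ := hclq1
    have hcc := Finset.card_le_card hQs
    rwa [hQc, Nat.card_Icc, Nat.add_sub_cancel] at hcc
  have hkq : k ≤ q := by
    by_contra hcon
    push_neg at hcon
    obtain ⟨Q, hQA, hQc⟩ := Finset.exists_subset_card_eq
      (show q + 1 ≤ A₀.card by omega)
    apply hclq2
    refine ⟨Q, hQA.trans hA₀p.1, hQc, ?_⟩
    intro S hS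
    rw [Finset.mem_powersetCard] at hS
    have hSQ : S = Q := Finset.eq_of_subset_of_card_le hS.1 (by omega)
    have hkq1 : k = q + 1 := by rw [← hS.2, hSQ, hQc]
    have hQA₀ : Q = A₀ := Finset.eq_of_subset_of_card_le hQA (by omega)
    rw [hSQ, hQA₀]; exact hA₀
  -- ### Step A: the family G = down-shift of F0
  have hF0F : ∀ A ∈ F0, A ∈ F ∧ 1 ∉ A := fun A hA => Finset.mem_filter.mp hA
  have hF0mem : ∀ A ∈ F0, A ⊆ Finset.Icc 2 n ∧ A.card = k := by
    intro A hA
    obtain ⟨hAF, h1A⟩ := hF0F A hA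
    obtain ⟨hsub, hcard⟩ := hmemF A hAF
    refine ⟨?_, hcard⟩
    intro x hx
    have hxi := hsub hx
    simp only [Finset.mem_Icc] at hxi ⊢
    have hne : x ≠ 1 := fun e => h1A (e ▸ hx)
    omega
  have hF0ge2 : ∀ A ∈ F0, ∀ a ∈ A, 2 ≤ a := by
    intro A hA a ha
    have := (hF0mem A hA).1 ha
    simp only [Finset.mem_Icc] at this; omega
  set G := F0.image fdn with hGdef
  have hupG : G.image fup = F0 := by
    ext X
    simp only [hGdef, Finset.mem_image]
    constructor
    · rintro ⟨Y, ⟨A, hA, rfl⟩, rfl⟩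
      rwa [fup_fdn (fun a ha => by have := hF0ge2 A hA a ha; omega)]
    · intro hX
      exact ⟨fdn X, ⟨X, hX, rfl⟩,
        fup_fdn (fun a ha => by have := hF0ge2 X hX a ha; omega)⟩
  have hGcard : G.card = F0.card := by
    rw [hGdef]
    apply Finset.card_image_of_injOn
    intro A hA B hB he
    have h1 : fup (fdn A) = fup (fdn B) := by rw [he]
    rwa [fup_fdn (fun a ha => by have := hF0ge2 A hA a ha; omega),
      fup_fdn (fun a ha => by have := hF0ge2 B hB a ha; omega)] at h1
  have hGsub : G ⊆ (Finset.Icc 1 (n - 1)).powersetCard k := by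
    intro X hX
    rw [hGdef, Finset.mem_image] at hX
    obtain ⟨A, hA, rfl⟩ := hX
    refine Finset.mem_powersetCard.mpr ⟨?_, ?_⟩
    · intro x hx
      obtain ⟨a, ha, rfl⟩ := mem_fdn.mp hx
      have h2 := hF0ge2 A hA a ha
      have hai := (hF0mem A hA).1 ha
      simp only [Finset.mem_Icc] at hai ⊢; omega
    · rw [card_fdn (fun a ha => by have := hF0ge2 A hA a ha; omega), (hF0mem A hA).2]
  have hGshift : IsShifted (n - 1) G := by
    intro B' hB' A' hA' hsh
    rw [hGdef, Finset.mem_image] at hB'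
    obtain ⟨B, hB, rfl⟩ := hB'
    have hBup : fup (fdn B) = B := fup_fdn (fun a ha => by have := hF0ge2 B hB a ha; omega)
    have hup_sub : fup A' ⊆ Finset.Icc 1 n := by
      intro x hx; obtain ⟨a, ha, rfl⟩ := mem_fup.mp hx
      have := hA' ha; simp only [Finset.mem_Icc] at this ⊢; omega
    have hshup : shiftLE (fup A') B := by
      rw [← hBup]; exact shiftLE_fup.mpr hsh
    have hFup : fup A' ∈ F := hshift B (hF0F B hB).1 (fup A') hup_sub hshup
    have h1up : 1 ∉ fup A' := by
      intro h; obtain ⟨a, ha, he⟩ := mem_fup.mp h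
      have := hA' ha; simp only [Finset.mem_Icc] at this; omega
    have hmem0 : fup A' ∈ F0 := by
      rw [hF0def, Finset.mem_filter]; exact ⟨hFup, h1up⟩
    rw [hGdef, Finset.mem_image]
    exact ⟨fup A', hmem0, fdn_fup A'⟩
  have hGmatch : MatchingEq G (s - 1) := by
    constructor
    · rw [← matchingLE_fup (G := G), hupG]; exact hred.1
    · rw [← hasMatching_fup (G := G), hupG]; exact hred.2
  obtain ⟨Qc, hQcs, hQcc, hQcpow⟩ := hclq1
  have hclique_sub : ∀ S ⊆ Finset.Icc 1 q, S.card = k → S ∈ F :=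
    fun S hS hSc => clique_downset hshift hqn hQcs hQcc hQcpow hS hSc
  have hGHas : HasClique (n - 1) G k (q - 1) := by
    refine ⟨Finset.Icc 1 (q - 1), Finset.Icc_subset_Icc le_rfl (by omega),
      by rw [Nat.card_Icc]; omega, ?_⟩
    intro S hS
    rw [Finset.mem_powersetCard] at hS
    obtain ⟨hSsub, hScard⟩ := hS
    have hSmem : ∀ a ∈ S, 1 ≤ a ∧ a ≤ q - 1 := by
      intro a ha; have := hSsub ha; simpa [Finset.mem_Icc] using this
    have hfupS : fup S ⊆ Finset.Icc 1 q := by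
      intro x hx; obtain ⟨a, ha, rfl⟩ := mem_fup.mp hx
      have := hSmem a ha; simp only [Finset.mem_Icc]; omega
    have hFup : fup S ∈ F := hclique_sub (fup S) hfupS (by rw [card_fup, hScard])
    have h1up : 1 ∉ fup S := by
      intro h; obtain ⟨a, ha, he⟩ := mem_fup.mp h
      have := hSmem a ha; omega
    have hmem0 : fup S ∈ F0 := by
      rw [hF0def, Finset.mem_filter]; exact ⟨hFup, h1up⟩
    rw [hGdef, Finset.mem_image]
    exact ⟨fup S, hmem0, fdn_fup S⟩
  have hGnot : ¬ HasClique (n - 1) G k (q - 1 + 1) := by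
    rw [show q - 1 + 1 = q by omega]
    rintro ⟨Q', hQ's, hQ'c, hQ'pow⟩
    apply hclq2
    have hupQ' : fup Q' ⊆ Finset.Icc 2 n := by
      intro x hx; obtain ⟨a, ha, rfl⟩ := mem_fup.mp hx
      have := hQ's ha; simp only [Finset.mem_Icc] at this ⊢; omega
    have hcardupQ' : (fup Q').card = q := by rw [card_fup, hQ'c]
    have h1Q' : 1 ∉ fup Q' := fun h => by
      have := hupQ' h; simp [Finset.mem_Icc] at this
    have hTmem : ∀ T, T ⊆ fup Q' → T.card = k → T ∈ F0 := by
      intro T hT hTc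
      have hT2 : ∀ t ∈ T, 2 ≤ t := fun t ht => by
        have := hupQ' (hT ht); simp only [Finset.mem_Icc] at this; omega
      have hfdnT : fdn T ∈ Q'.powersetCard k := by
        refine Finset.mem_powersetCard.mpr ⟨?_, ?_⟩
        · intro x hx; obtain ⟨t, ht, rfl⟩ := mem_fdn.mp hx
          obtain ⟨a, ha, he⟩ := mem_fup.mp (hT ht)
          have he2 : t - 1 = a := by omega
          rw [he2]; exact ha
        · rw [card_fdn (fun t ht => by have := hT2 t ht; omega), hTc]
      have hmemG : fdn T ∈ G := hQ'pow hfdnT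
      have hmem1 : fup (fdn T) ∈ G.image fup := Finset.mem_image_of_mem _ hmemG
      rwa [hupG, fup_fdn (fun t ht => by have := hT2 t ht; omega)] at hmem1
    refine ⟨insert 1 (fup Q'), ?_, ?_, ?_⟩
    · intro x hx; rcases Finset.mem_insert.mp hx with rfl | hx2
      · simp only [Finset.mem_Icc]; omega
      · have := hupQ' hx2; simp only [Finset.mem_Icc] at this ⊢; omega
    · rw [Finset.card_insert_of_notMem h1Q', hcardupQ']
    · intro S hS
      rw [Finset.mem_powersetCard] at hS
      obtain ⟨hSsub, hScard⟩ := hS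
      by_cases h1S : 1 ∈ S
      · set S' := S.erase 1 with hS'def
        have hS'sub : S' ⊆ fup Q' := by
          intro x hx
          have hx1 := Finset.mem_of_mem_erase hx
          have hxne := Finset.ne_of_mem_erase hx
          rcases Finset.mem_insert.mp (hSsub hx1) with rfl | h
          · exact absurd rfl hxne
          · exact h
        have hS'card : S'.card = k - 1 := by
          rw [hS'def, Finset.card_erase_of_mem h1S, hScard]
        obtain ⟨T, hS'T, hTQ', hTc⟩ := Finset.exists_subsuperset_card_eq hS'sub
          (show S'.card ≤ k by rw [hS'card]; omega)
          (show k ≤ (fup Q').card by rw [hcardupQ']; omega)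
        have hTF0 : T ∈ F0 := hTmem T hTQ' hTc
        have hTF : T ∈ F := (hF0F T hTF0).1
        have hSeq : S = insert 1 S' := (Finset.insert_erase h1S).symm
        have hshS : shiftLE S T := by
          rw [hSeq]
          apply shiftLE_insert_one
          · intro x hx; have := hupQ' (hS'sub hx)
            simp only [Finset.mem_Icc] at this; omega
          · intro x hx; have := hupQ' (hTQ' hx)
            simp only [Finset.mem_Icc] at this; omega
          · exact hS'T
          · rw [hTc, hS'card]; omega
        apply hshift T hTF S ?_ hshS
        intro x hx
        rcases Finset.mem_insert.mp (hSsub hx) with rfl | h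
        · simp only [Finset.mem_Icc]; omega
        · have := hupQ' h; simp only [Finset.mem_Icc] at this ⊢; omega
      · have hSsub' : S ⊆ fup Q' := by
          intro x hx
          rcases Finset.mem_insert.mp (hSsub hx) with rfl | h
          · exact absurd hx h1S
          · exact h
        exact (hF0F S (hTmem S hSsub' hScard)).1
  have hGin : F0.card ∈ {m : ℕ | ∃ F : Finset (Finset ℕ),
      F ⊆ (Finset.Icc 1 (n - 1)).powersetCard k ∧ IsShifted (n - 1) F ∧
        MatchingEq F (s - 1) ∧ CliqueEq (n - 1) F k (q - 1) ∧ F.card = m} :=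
    ⟨G, hGsub, hGshift, hGmatch, ⟨hGHas, hGnot⟩, hGcard⟩
  have hle0 : F0.card ≤ mstar (n - 1) (q - 1) k (s - 1) :=
    le_csSup (mstar_bdd (n - 1) (q - 1) k (s - 1)) hGin
  -- ### Step B: obtain an extremal family Gs and build H
  have hmmem := Nat.sSup_mem ⟨F0.card, hGin⟩ (mstar_bdd (n - 1) (q - 1) k (s - 1))
  obtain ⟨Gs, hGssub, hGsshift, hGsmatch, hGsclq, hGscard⟩ := hmmem
  have hGscard' : Gs.card = mstar (n - 1) (q - 1) k (s - 1) := hGscard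
  set H := ((Finset.Icc 1 n).powersetCard k).filter (fun S => 1 ∈ S) ∪ Gs.image fup
    with hHdef
  have hGsmem : ∀ A ∈ Gs, A ⊆ Finset.Icc 1 (n - 1) ∧ A.card = k :=
    fun A hA => Finset.mem_powersetCard.mp (hGssub hA)
  have hupGs : ∀ X ∈ Gs.image fup, 1 ∉ X ∧ X ⊆ Finset.Icc 2 n ∧ X.card = k := by
    intro X hX
    obtain ⟨A, hA, rfl⟩ := Finset.mem_image.mp hX
    obtain ⟨hsub, hcard⟩ := hGsmem A hA
    refine ⟨?_, ?_, by rw [card_fup, hcard]⟩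
    · intro h; obtain ⟨a, ha, he⟩ := mem_fup.mp h
      have := hsub ha; simp only [Finset.mem_Icc] at this; omega
    · intro x hx; obtain ⟨a, ha, rfl⟩ := mem_fup.mp hx
      have := hsub ha; simp only [Finset.mem_Icc] at this ⊢; omega
  have hHsub : H ⊆ (Finset.Icc 1 n).powersetCard k := by
    intro X hX
    rcases Finset.mem_union.mp hX with h | h
    · exact (Finset.mem_filter.mp h).1
    · obtain ⟨h1, hsub, hcard⟩ := hupGs X h
      refine Finset.mem_powersetCard.mpr ⟨?_, hcard⟩
      intro x hx; have := hsub hx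
      simp only [Finset.mem_Icc] at this ⊢; omega
  have hHcard : H.card = (n - 1).choose (k - 1) + mstar (n - 1) (q - 1) k (s - 1) := by
    have hHd : Disjoint (((Finset.Icc 1 n).powersetCard k).filter (fun S => 1 ∈ S))
        (Gs.image fup) := by
      rw [Finset.disjoint_left]
      intro X hX hX'
      exact (hupGs X hX').1 (Finset.mem_filter.mp hX).2
    rw [hHdef, Finset.card_union_of_disjoint hHd, card_filter_one hk hn1,
      Finset.card_image_of_injective _ fup_injective, hGscard']
  have hHshift : IsShifted n H := by
    intro B hB A hA hsh
    have hcardB := (Finset.mem_powersetCard.mp (hHsub hB)).2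
    have hcardA : A.card = k := by rw [shiftLE_card hsh, hcardB]
    by_cases h1A : 1 ∈ A
    · exact Finset.mem_union_left _
        (Finset.mem_filter.mpr ⟨Finset.mem_powersetCard.mpr ⟨hA, hcardA⟩, h1A⟩)
    · have hBup : B ∈ Gs.image fup := by
        rcases Finset.mem_union.mp hB with h | h
        · exfalso
          apply h1A
          apply shiftLE_one_mem hsh (Finset.mem_filter.mp h).2
          intro a ha; have := hA ha; simp only [Finset.mem_Icc] at this; omega
        · exact h
      obtain ⟨B₀, hB₀, rfl⟩ := Finset.mem_image.mp hBup
      have hA2 : ∀ a ∈ A, 2 ≤ a := by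
        intro a ha
        have hai := hA ha
        simp only [Finset.mem_Icc] at hai
        have hne : a ≠ 1 := fun e => h1A (e ▸ ha)
        omega
      have hAeq : fup (fdn A) = A := fup_fdn (fun a ha => by have := hA2 a ha; omega)
      have hsh' : shiftLE (fdn A) B₀ := by
        rw [← shiftLE_fup, hAeq]
        exact hsh
      have hfdnA : fdn A ⊆ Finset.Icc 1 (n - 1) := by
        intro x hx; obtain ⟨a, ha, rfl⟩ := mem_fdn.mp hx
        have h2 := hA2 a ha
        have hai := hA ha
        simp only [Finset.mem_Icc] at hai ⊢; omega
      have hmemGs : fdn A ∈ Gs := hGsshift B₀ hB₀ (fdn A) hfdnA hsh'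
      exact Finset.mem_union_right _ (by rw [← hAeq]; exact Finset.mem_image_of_mem _ hmemGs)
  have hHmLE : MatchingLE H s := by
    intro M hM hpd
    have hsplitM := Finset.card_filter_add_card_filter_not
      (s := M) (p := fun X => 1 ∈ X)
    have hM1 : (M.filter (fun X => 1 ∈ X)).card ≤ 1 := by
      rw [Finset.card_le_one]
      intro X hX Y hY
      rw [Finset.mem_filter] at hX hY
      by_contra hne
      have hd := hpd (Finset.mem_coe.mpr hX.1) (Finset.mem_coe.mpr hY.1) hne
      exact (Finset.disjoint_left.mp hd hX.2) hY.2
    have hM0sub : M.filter (fun X => ¬ 1 ∈ X) ⊆ Gs.image fup := by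
      intro X hX
      rw [Finset.mem_filter] at hX
      rcases Finset.mem_union.mp (hM hX.1) with h | h
      · exact absurd (Finset.mem_filter.mp h).2 hX.2
      · exact h
    have hGsLE : MatchingLE (Gs.image fup) (s - 1) := matchingLE_fup.mpr hGsmatch.1
    have hM0 : (M.filter (fun X => ¬ 1 ∈ X)).card ≤ s - 1 :=
      hGsLE _ hM0sub (hpd.subset (Finset.coe_subset.mpr (Finset.filter_subset _ _)))
    omega
  have hHmHas : HasMatching H s := by
    obtain ⟨M', hM'sub, hM'pd, hM'card⟩ := hGsmatch.2
    set Mup := M'.image fup with hMupdef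
    have hMuppd : ((Mup : Finset (Finset ℕ)) : Set (Finset ℕ)).PairwiseDisjoint id :=
      pd_fup.mpr hM'pd
    have hMupcard : Mup.card = s - 1 := by
      rw [hMupdef, Finset.card_image_of_injective _ fup_injective, hM'card]
    have hMupmem : ∀ X ∈ Mup, 1 ∉ X ∧ X ⊆ Finset.Icc 2 n ∧ X.card = k := by
      intro X hX
      exact hupGs X (by rw [hMupdef] at hX; exact Finset.image_subset_image hM'sub hX)
    set U := Mup.biUnion id with hUdef
    have hUsub : U ⊆ Finset.Icc 2 n := by
      intro x hx; obtain ⟨X, hX, hxX⟩ := Finset.mem_biUnion.mp hx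
      exact (hMupmem X hX).2.1 hxX
    have hUcard : U.card = (s - 1) * k := by
      rw [hUdef, Finset.card_biUnion (fun X hX Y hY hne => hMuppd hX hY hne)]
      have he : ∀ X ∈ Mup, (id X).card = k := fun X hX => (hMupmem X hX).2.2
      rw [Finset.sum_congr rfl he, Finset.sum_const, smul_eq_mul, hMupcard]
    have hVcard : (Finset.Icc 2 n \ U).card = (n - 1) - (s - 1) * k := by
      rw [Finset.card_sdiff_of_subset hUsub, Nat.card_Icc, hUcard]; omega
    have hbound : k - 1 ≤ (n - 1) - (s - 1) * k := by
      have h1 : (s - 1) * k = s * k - k := by rw [Nat.sub_one_mul]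
      have h2 : k ≤ s * k := Nat.le_mul_of_pos_left k (by omega)
      omega
    obtain ⟨W, hWsub, hWcard⟩ := Finset.exists_subset_card_eq
      (show k - 1 ≤ (Finset.Icc 2 n \ U).card by rw [hVcard]; exact hbound)
    have hW2 : ∀ x ∈ W, 2 ≤ x ∧ x ≤ n ∧ x ∉ U := by
      intro x hx
      have hxw := hWsub hx
      rw [Finset.mem_sdiff] at hxw
      have h2 := hxw.1; simp only [Finset.mem_Icc] at h2
      exact ⟨h2.1, h2.2, hxw.2⟩
    have h1W : 1 ∉ W := fun h => by have := (hW2 1 h).1; omega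
    have hScard : (insert 1 W).card = k := by
      rw [Finset.card_insert_of_notMem h1W, hWcard]; omega
    have hSsub : insert 1 W ⊆ Finset.Icc 1 n := by
      intro x hx; rcases Finset.mem_insert.mp hx with rfl | h
      · simp only [Finset.mem_Icc]; omega
      · have := hW2 x h; simp only [Finset.mem_Icc]; omega
    have hSH : insert 1 W ∈ H :=
      Finset.mem_union_left _ (Finset.mem_filter.mpr
        ⟨Finset.mem_powersetCard.mpr ⟨hSsub, hScard⟩, Finset.mem_insert_self _ _⟩)
    have hSnotMup : insert 1 W ∉ Mup :=
      fun h => (hMupmem _ h).1 (Finset.mem_insert_self _ _)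
    have hSdisj : ∀ X ∈ Mup, Disjoint (insert 1 W) X := by
      intro X hX
      rw [Finset.disjoint_left]
      intro a ha haX
      rcases Finset.mem_insert.mp ha with rfl | h
      · exact (hMupmem X hX).1 haX
      · exact (hW2 a h).2.2 (Finset.mem_biUnion.mpr ⟨X, hX, haX⟩)
    refine ⟨insert (insert 1 W) Mup, ?_, ?_, ?_⟩
    · apply Finset.insert_subset hSH
      intro X hX
      exact Finset.mem_union_right _ (Finset.image_subset_image hM'sub (hMupdef ▸ hX))
    · rw [Finset.coe_insert]
      exact hMuppd.insert (fun X hX hne => hSdisj X (Finset.mem_coe.mp hX))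
    · rw [Finset.card_insert_of_notMem hSnotMup, hMupcard]; omega
  have hHclq : CliqueEq n H k q := by
    constructor
    · obtain ⟨Q', hQ's, hQ'c, hQ'pow⟩ := hGsclq.1
      have hupQ'sub : fup Q' ⊆ Finset.Icc 2 n := by
        intro x hx; obtain ⟨a, ha, rfl⟩ := mem_fup.mp hx
        have := hQ's ha; simp only [Finset.mem_Icc] at this ⊢; omega
      have h1Q' : 1 ∉ fup Q' := fun h => by
        have := hupQ'sub h; simp [Finset.mem_Icc] at this
      refine ⟨insert 1 (fup Q'), ?_, ?_, ?_⟩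
      · intro x hx; rcases Finset.mem_insert.mp hx with rfl | h
        · simp only [Finset.mem_Icc]; omega
        · have := hupQ'sub h; simp only [Finset.mem_Icc] at this ⊢; omega
      · rw [Finset.card_insert_of_notMem h1Q', card_fup, hQ'c]; omega
      · intro S hS
        rw [Finset.mem_powersetCard] at hS
        obtain ⟨hSsub, hScard⟩ := hS
        by_cases h1S : 1 ∈ S
        · apply Finset.mem_union_left
          refine Finset.mem_filter.mpr ⟨Finset.mem_powersetCard.mpr ⟨?_, hScard⟩, h1S⟩
          intro x hx
          rcases Finset.mem_insert.mp (hSsub hx) with rfl | h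
          · simp only [Finset.mem_Icc]; omega
          · have := hupQ'sub h; simp only [Finset.mem_Icc] at this ⊢; omega
        · have hSup : S ⊆ fup Q' := by
            intro x hx; rcases Finset.mem_insert.mp (hSsub hx) with rfl | h
            · exact absurd hx h1S
            · exact h
          have hS2 : ∀ x ∈ S, 2 ≤ x := fun x hx => by
            have := hupQ'sub (hSup hx); simp only [Finset.mem_Icc] at this; omega
          have hfdnS : fdn S ∈ Q'.powersetCard k := by
            refine Finset.mem_powersetCard.mpr ⟨?_, ?_⟩
            · intro x hx; obtain ⟨t, ht, rfl⟩ := mem_fdn.mp hx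
              obtain ⟨a, ha, he⟩ := mem_fup.mp (hSup ht)
              have he2 : t - 1 = a := by omega
              rw [he2]; exact ha
            · rw [card_fdn (fun t ht => by have := hS2 t ht; omega), hScard]
          have hmemGs : fdn S ∈ Gs := hQ'pow hfdnS
          apply Finset.mem_union_right
          have hSe : fup (fdn S) = S :=
            fup_fdn (fun x hx => by have := hS2 x hx; omega)
          rw [← hSe]
          exact Finset.mem_image_of_mem _ hmemGs
    · rintro ⟨Q, hQs, hQc, hQpow⟩
      apply hGsclq.2
      rw [show q - 1 + 1 = q by omega]
      have hQ0card : q ≤ (Q.erase 1).card := by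
        by_cases h : 1 ∈ Q
        · rw [Finset.card_erase_of_mem h, hQc]; omega
        · rw [Finset.erase_eq_of_notMem h, hQc]; omega
      obtain ⟨Q1, hQ1sub, hQ1card⟩ := Finset.exists_subset_card_eq hQ0card
      have hQ1mem : ∀ x ∈ Q1, 2 ≤ x ∧ x ≤ n := by
        intro x hx
        have hx0 := hQ1sub hx
        have hxQ := Finset.mem_of_mem_erase hx0
        have hxne := Finset.ne_of_mem_erase hx0
        have := hQs hxQ; simp only [Finset.mem_Icc] at this; omega
      refine ⟨fdn Q1, ?_, ?_, ?_⟩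
      · intro x hx; obtain ⟨t, ht, rfl⟩ := mem_fdn.mp hx
        have := hQ1mem t ht; simp only [Finset.mem_Icc]; omega
      · rw [card_fdn (fun t ht => by have := (hQ1mem t ht).1; omega), hQ1card]
      · intro S0 hS0
        rw [Finset.mem_powersetCard] at hS0
        obtain ⟨hS0sub, hS0card⟩ := hS0
        have hfupS0Q1 : fup S0 ⊆ Q1 := by
          intro x hx; obtain ⟨a, ha, rfl⟩ := mem_fup.mp hx
          obtain ⟨t, ht, he⟩ := mem_fdn.mp (hS0sub ha)
          have h2 := (hQ1mem t ht).1
          have he2 : t = a + 1 := by omega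
          rwa [← he2]
        have hfupS0H : fup S0 ∈ H := hQpow (Finset.mem_powersetCard.mpr
          ⟨hfupS0Q1.trans (hQ1sub.trans (Finset.erase_subset _ _)),
            by rw [card_fup, hS0card]⟩)
        have h1up : 1 ∉ fup S0 := by
          intro h; obtain ⟨a, ha, he⟩ := mem_fup.mp h
          obtain ⟨t, ht, he2⟩ := mem_fdn.mp (hS0sub ha)
          have := (hQ1mem t ht).1; omega
        have hmem2 : fup S0 ∈ Gs.image fup := by
          rcases Finset.mem_union.mp hfupS0H with h | h
          · exact absurd (Finset.mem_filter.mp h).2 h1up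
          · exact h
        obtain ⟨A, hA, he⟩ := Finset.mem_image.mp hmem2
        exact (fup_injective he) ▸ hA
  -- ### conclusion
  have hHin : H.card ∈ {m : ℕ | ∃ F : Finset (Finset ℕ),
      F ⊆ (Finset.Icc 1 n).powersetCard k ∧ IsShifted n F ∧
        MatchingEq F s ∧ CliqueEq n F k q ∧ F.card = m} :=
    ⟨H, hHsub, hHshift, ⟨hHmLE, hHmHas⟩, hHclq, rfl⟩
  have hge : (n - 1).choose (k - 1) + mstar (n - 1) (q - 1) k (s - 1) ≤ mstar n q k s := by
    rw [← hHcard]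
    exact le_csSup (mstar_bdd n q k s) hHin
  have hle : mstar n q k s ≤ (n - 1).choose (k - 1) + mstar (n - 1) (q - 1) k (s - 1) := by
    rw [← hmax]
    have hsplit : F1.card + F0.card = F.card := by
      rw [hF1def, hF0def]
      exact Finset.card_filter_add_card_filter_not _
    have hF1le : F1.card ≤ (n - 1).choose (k - 1) := by
      rw [← card_filter_one (n := n) (k := k) hk hn1]
      apply Finset.card_le_card
      intro A hA
      rw [hF1def, Finset.mem_filter] at hA
      exact Finset.mem_filter.mpr ⟨hF hA.1, hA.2⟩
    omega
  omega
end
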